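/- arXiv:1704.02961 — 5 statements merged into one kernel-verified Lean document; each statement's English description precedes it below -/
import Mathlib

section
/- For any diffusion coefficients D_I, D_S > 0, there exists T > 0 such that system (C) admits a unique solution on J × [0,T]: a unique pair of C¹ functions S, I : J × [0,T] → ℝ satisfying ∂S/∂t = I(μ − β₀S) − D_S(S − (x/m)s(t)) and ∂I/∂t = I(−μ + β₀S) − D_I(I − (x/m)i(t)) on J × [0,T], where s(t) = ⟨S(·,t)⟩ and i(t) = ⟨I(·,t)⟩, with S(x,0) = S₀(x) and I(x,0) = I₀(x). -/
open Real Set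

/-- `(S, I)` is a solution of the nonlocal system `(C)` on `J × [0,T]`:
a pair of `C¹` functions satisfying the two evolution equations (with the nonlocal
averages `s(t) = ⟨S(·,t)⟩`, `i(t) = ⟨I(·,t)⟩`) and the initial conditions. -/
def IsSolutionC (xmax m μ β₀ DS DI T : ℝ) (p S₀ I₀ : ℝ → ℝ)
    (S I : ℝ → ℝ → ℝ) : Prop :=
  ContDiffOn ℝ 1 (Function.uncurry S) (Icc 0 xmax ×ˢ Icc 0 T) ∧
  ContDiffOn ℝ 1 (Function.uncurry I) (Icc 0 xmax ×ˢ Icc 0 T) ∧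
  (∀ x ∈ Icc (0:ℝ) xmax, ∀ t ∈ Icc (0:ℝ) T,
    HasDerivAt (S x)
      (I x t * (μ - β₀ * S x t) -
        DS * (S x t - x / m * ∫ y in (0:ℝ)..xmax, S y t * p y)) t) ∧
  (∀ x ∈ Icc (0:ℝ) xmax, ∀ t ∈ Icc (0:ℝ) T,
    HasDerivAt (I x)
      (I x t * (-μ + β₀ * S x t) -
        DI * (I x t - x / m * ∫ y in (0:ℝ)..xmax, I y t * p y)) t) ∧
  (∀ x ∈ Icc (0:ℝ) xmax, S x 0 = S₀ x) ∧
  (∀ x ∈ Icc (0:ℝ) xmax, I x 0 = I₀ x)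

namespace LEU

noncomputable section

abbrev A := BoundedContinuousFunction ℝ ℝ

/-- clamp to [0, xmax] -/
def cl (xmax x : ℝ) : ℝ := max 0 (min x xmax)

lemma continuous_cl (xmax : ℝ) : Continuous (cl xmax) :=
  continuous_const.max ((continuous_id.min continuous_const))

lemma cl_mem {xmax : ℝ} (h : 0 ≤ xmax) (x : ℝ) : cl xmax x ∈ Icc 0 xmax :=
  ⟨le_max_left _ _, max_le h (min_le_right _ _)⟩

lemma cl_eq {xmax x : ℝ} (hx : x ∈ Icc 0 xmax) : cl xmax x = x := by
  simp [cl, min_eq_left hx.2, max_eq_right hx.1]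

variable {xmax : ℝ}

lemma J_pointwise (h : 0 ≤ xmax) (f : A) (x : ℝ) :
    ‖∫ y in (0:ℝ)..cl xmax x, f y‖ ≤ xmax * ‖f‖ := by
  have hb : ∀ y ∈ Set.uIoc (0:ℝ) (cl xmax x), ‖f y‖ ≤ ‖f‖ := fun y _ => f.norm_coe_le_norm y
  have h2 := intervalIntegral.norm_integral_le_of_norm_le_const hb
  refine h2.trans ?_
  rw [sub_zero]
  have h3 : |cl xmax x| ≤ xmax := by
    rw [abs_of_nonneg (cl_mem h x).1]; exact (cl_mem h x).2
  calc ‖f‖ * |cl xmax x| ≤ ‖f‖ * xmax := mul_le_mul_of_nonneg_left h3 (norm_nonneg f)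
    _ = xmax * ‖f‖ := mul_comm _ _

/-- primitive operator -/
def J (h : 0 ≤ xmax) : A →L[ℝ] A :=
  LinearMap.mkContinuous
    { toFun := fun f => BoundedContinuousFunction.ofNormedAddCommGroup
        (fun x => ∫ y in (0:ℝ)..cl xmax x, f y)
        ((intervalIntegral.continuous_primitive
          (fun a b => f.continuous.intervalIntegrable a b) 0).comp (continuous_cl xmax))
        (xmax * ‖f‖)
        (J_pointwise h f)
      map_add' := fun f g => by
        ext x
        simp only [BoundedContinuousFunction.coe_ofNormedAddCommGroup,
          BoundedContinuousFunction.coe_add, Pi.add_apply]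
        exact intervalIntegral.integral_add (f.continuous.intervalIntegrable _ _)
          (g.continuous.intervalIntegrable _ _)
      map_smul' := fun c f => by
        ext x
        simp only [BoundedContinuousFunction.coe_ofNormedAddCommGroup,
          BoundedContinuousFunction.coe_smul, Pi.smul_apply, RingHom.id_apply, smul_eq_mul]
        exact intervalIntegral.integral_smul c _ }
    xmax
    (fun f => BoundedContinuousFunction.norm_ofNormedAddCommGroup_le _
      (by positivity) (J_pointwise h f))

lemma J_apply (h : 0 ≤ xmax) (f : A) (x : ℝ) :
    J h f x = ∫ y in (0:ℝ)..cl xmax x, f y := rfl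

/-- embedding (a, P) ↦ (x ↦ a + ∫₀^{cl x} P) -/
def emb (h : 0 ≤ xmax) : ℝ × A →L[ℝ] A :=
  (ContinuousLinearMap.fst ℝ ℝ A).smulRight (1 : A) + (J h).comp (ContinuousLinearMap.snd ℝ ℝ A)

lemma emb_apply (h : 0 ≤ xmax) (u : ℝ × A) (x : ℝ) :
    emb h u x = u.1 + ∫ y in (0:ℝ)..cl xmax x, u.2 y := by
  simp [emb, J_apply, BoundedContinuousFunction.coe_add]

variable {p : ℝ → ℝ}

/-- averaging functional -/
def avg (h : 0 ≤ xmax) (hp : IntervalIntegrable p MeasureTheory.volume 0 xmax) : A →L[ℝ] ℝ :=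
  LinearMap.mkContinuous
    { toFun := fun f => ∫ y in (0:ℝ)..xmax, f y * p y
      map_add' := fun f g => by
        simp only [BoundedContinuousFunction.coe_add, Pi.add_apply, add_mul]
        exact intervalIntegral.integral_add
          (hp.continuousOn_mul f.continuous.continuousOn)
          (hp.continuousOn_mul g.continuous.continuousOn)
      map_smul' := fun c f => by
        simp only [BoundedContinuousFunction.coe_smul, Pi.smul_apply, smul_eq_mul,
          RingHom.id_apply, mul_assoc]
        exact intervalIntegral.integral_smul c _ }
    (∫ y in (0:ℝ)..xmax, |p y|)
    (fun f => by
      simp only [LinearMap.coe_mk, AddHom.coe_mk]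
      have h1 : ‖∫ y in (0:ℝ)..xmax, f y * p y‖ ≤ ∫ y in (0:ℝ)..xmax, ‖f y * p y‖ :=
        intervalIntegral.norm_integral_le_integral_norm h
      refine h1.trans ?_
      have h2 : (∫ y in (0:ℝ)..xmax, ‖f y * p y‖) ≤ ∫ y in (0:ℝ)..xmax, ‖f‖ * |p y| := by
        apply intervalIntegral.integral_mono_on h
          ((hp.continuousOn_mul f.continuous.continuousOn).norm) (hp.abs.const_mul _)
        intro y _
        rw [norm_mul]
        exact mul_le_mul_of_nonneg_right (f.norm_coe_le_norm y) (abs_nonneg _)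
      refine h2.trans ?_
      rw [intervalIntegral.integral_const_mul]
      exact (mul_comm _ _).le)

lemma avg_apply (h : 0 ≤ xmax) (hp : IntervalIntegrable p MeasureTheory.volume 0 xmax) (f : A) :
    avg h hp f = ∫ y in (0:ℝ)..xmax, f y * p y := rfl


abbrev EE := (ℝ × A) × (ℝ × A)

/-- the function x ↦ cl x / m as an element of A -/
def lin (h : 0 ≤ xmax) (m : ℝ) : A :=
  BoundedContinuousFunction.ofNormedAddCommGroup (fun x => cl xmax x / m)
    ((continuous_cl xmax).div_const m) (xmax * |m|⁻¹)
    (by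
      intro x
      have hb : |cl xmax x| * |m|⁻¹ ≤ xmax * |m|⁻¹ := by
        rw [abs_of_nonneg (cl_mem h x).1]
        exact mul_le_mul_of_nonneg_right (cl_mem h x).2 (by positivity)
      calc ‖cl xmax x / m‖ = |cl xmax x| * |m|⁻¹ := by
            rw [Real.norm_eq_abs, div_eq_mul_inv, abs_mul, abs_inv]
        _ ≤ xmax * |m|⁻¹ := hb)

lemma lin_apply (h : 0 ≤ xmax) (m x : ℝ) : lin h m x = cl xmax x / m := rfl

variable (m μ β₀ DS DI : ℝ)

/-- the 2-component vector field on A × A -/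
def F2 (h : 0 ≤ xmax) (hp : IntervalIntegrable p MeasureTheory.volume 0 xmax) :
    A × A → A × A := fun u =>
  (u.2 * (μ • 1 - β₀ • u.1) - DS • (u.1 - avg h hp u.1 • lin h m),
   u.2 * ((-μ) • 1 + β₀ • u.1) - DI • (u.2 - avg h hp u.2 • lin h m))

lemma F2_fst_apply (h : 0 ≤ xmax) (hp : IntervalIntegrable p MeasureTheory.volume 0 xmax)
    (u : A × A) (x : ℝ) :
    (F2 m μ β₀ DS DI h hp u).1 x
      = u.2 x * (μ - β₀ * u.1 x) - DS * (u.1 x - cl xmax x / m * avg h hp u.1) := by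
  simp only [F2, lin_apply, BoundedContinuousFunction.coe_sub,
    BoundedContinuousFunction.coe_add, BoundedContinuousFunction.coe_mul,
    BoundedContinuousFunction.coe_smul, BoundedContinuousFunction.coe_one,
    Pi.sub_apply, Pi.add_apply, Pi.mul_apply, Pi.smul_apply, Pi.one_apply, smul_eq_mul]
  ring

lemma F2_snd_apply (h : 0 ≤ xmax) (hp : IntervalIntegrable p MeasureTheory.volume 0 xmax)
    (u : A × A) (x : ℝ) :
    (F2 m μ β₀ DS DI h hp u).2 x
      = u.2 x * (-μ + β₀ * u.1 x) - DI * (u.2 x - cl xmax x / m * avg h hp u.2) := by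
  simp only [F2, lin_apply, BoundedContinuousFunction.coe_sub,
    BoundedContinuousFunction.coe_add, BoundedContinuousFunction.coe_mul,
    BoundedContinuousFunction.coe_smul, BoundedContinuousFunction.coe_one,
    Pi.sub_apply, Pi.add_apply, Pi.mul_apply, Pi.smul_apply, Pi.one_apply, smul_eq_mul]
  ring

/-- the 4-component vector field on EE -/
def G (h : 0 ≤ xmax) (hp : IntervalIntegrable p MeasureTheory.volume 0 xmax) :
    EE → EE := fun u =>
  ((u.2.1 * (μ - β₀ * u.1.1) - DS * u.1.1,
    u.2.2 * (μ • 1 - β₀ • emb h u.1) - β₀ • (emb h u.2 * u.1.2) - DS • u.1.2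
      + (DS / m * avg h hp (emb h u.1)) • 1),
   (u.2.1 * (-μ + β₀ * u.1.1) - DI * u.2.1,
    u.2.2 * ((-μ) • 1 + β₀ • emb h u.1) + β₀ • (emb h u.2 * u.1.2) - DI • u.2.2
      + (DI / m * avg h hp (emb h u.2)) • 1))

lemma contDiff_G (h : 0 ≤ xmax) (hp : IntervalIntegrable p MeasureTheory.volume 0 xmax) :
    ContDiff ℝ 1 (G m μ β₀ DS DI h hp) := by
  have ca : ContDiff ℝ 1 (fun u : EE => u.1.1) := contDiff_fst.comp contDiff_fst
  have cb : ContDiff ℝ 1 (fun u : EE => u.2.1) := contDiff_fst.comp contDiff_snd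
  have cP : ContDiff ℝ 1 (fun u : EE => u.1.2) := contDiff_snd.comp contDiff_fst
  have cQ : ContDiff ℝ 1 (fun u : EE => u.2.2) := contDiff_snd.comp contDiff_snd
  have cS : ContDiff ℝ 1 (fun u : EE => emb h u.1) := (emb h).contDiff.comp contDiff_fst
  have cI : ContDiff ℝ 1 (fun u : EE => emb h u.2) := (emb h).contDiff.comp contDiff_snd
  have cs : ContDiff ℝ 1 (fun u : EE => avg h hp (emb h u.1)) := (avg h hp).contDiff.comp cS
  have ci : ContDiff ℝ 1 (fun u : EE => avg h hp (emb h u.2)) := (avg h hp).contDiff.comp cI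
  refine ContDiff.prodMk (ContDiff.prodMk ?_ ?_) (ContDiff.prodMk ?_ ?_)
  · exact (cb.mul (contDiff_const.sub (contDiff_const.mul ca))).sub (contDiff_const.mul ca)
  · have h1 : ContDiff ℝ 1 (fun u : EE => u.2.2 * (μ • 1 - β₀ • emb h u.1)) :=
      cQ.mul (contDiff_const.sub (cS.const_smul β₀))
    have h2 : ContDiff ℝ 1 (fun u : EE => β₀ • (emb h u.2 * u.1.2)) := (cI.mul cP).const_smul β₀
    have h3 : ContDiff ℝ 1 (fun u : EE => DS • u.1.2) := cP.const_smul DS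
    have h4 : ContDiff ℝ 1 (fun u : EE => (DS / m * avg h hp (emb h u.1)) • (1:A)) :=
      (contDiff_const.mul cs).smul contDiff_const
    exact ((h1.sub h2).sub h3).add h4
  · exact (cb.mul (contDiff_const.add (contDiff_const.mul ca))).sub (contDiff_const.mul cb)
  · have h1 : ContDiff ℝ 1 (fun u : EE => u.2.2 * ((-μ) • 1 + β₀ • emb h u.1)) :=
      cQ.mul (contDiff_const.add (cS.const_smul β₀))
    have h2 : ContDiff ℝ 1 (fun u : EE => β₀ • (emb h u.2 * u.1.2)) := (cI.mul cP).const_smul β₀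
    have h3 : ContDiff ℝ 1 (fun u : EE => DI • u.2.2) := cQ.const_smul DI
    have h4 : ContDiff ℝ 1 (fun u : EE => (DI / m * avg h hp (emb h u.2)) • (1:A)) :=
      (contDiff_const.mul ci).smul contDiff_const
    exact ((h1.add h2).sub h3).add h4

/-- The key FTC identity: the embedded image of the 4-component vector field satisfies the
original nonlocal equations pointwise on [0,xmax]. -/
lemma key_identity (h : 0 ≤ xmax) (hp : IntervalIntegrable p MeasureTheory.volume 0 xmax)
    (u : EE) {x : ℝ} (hx : x ∈ Icc (0:ℝ) xmax) :
    emb h (G m μ β₀ DS DI h hp u).1 x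
      = emb h u.2 x * (μ - β₀ * emb h u.1 x)
        - DS * (emb h u.1 x - x / m * avg h hp (emb h u.1)) ∧
    emb h (G m μ β₀ DS DI h hp u).2 x
      = emb h u.2 x * (-μ + β₀ * emb h u.1 x)
        - DI * (emb h u.2 x - x / m * avg h hp (emb h u.2)) := by
  obtain ⟨⟨a, P⟩, ⟨b, Q⟩⟩ := u
  set Sb : ℝ → ℝ := fun y => a + ∫ z in (0:ℝ)..y, P z with hSbdef
  set Ib : ℝ → ℝ := fun y => b + ∫ z in (0:ℝ)..y, Q z with hIbdef
  have hSb : ∀ y : ℝ, HasDerivAt Sb (P y) y := fun y =>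
    ((P.continuous.integral_hasStrictDerivAt 0 y).hasDerivAt).const_add a
  have hIb : ∀ y : ℝ, HasDerivAt Ib (Q y) y := fun y =>
    ((Q.continuous.integral_hasStrictDerivAt 0 y).hasDerivAt).const_add b
  have hSeq : ∀ y ∈ Icc (0:ℝ) xmax, emb h (a, P) y = Sb y := by
    intro y hy; rw [emb_apply, cl_eq hy]
  have hIeq : ∀ y ∈ Icc (0:ℝ) xmax, emb h (b, Q) y = Ib y := by
    intro y hy; rw [emb_apply, cl_eq hy]
  have hSb0 : Sb 0 = a := by simp [hSbdef]
  have hIb0 : Ib 0 = b := by simp [hIbdef]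
  have hsubset : Icc (0:ℝ) x ⊆ Icc (0:ℝ) xmax := Icc_subset_Icc le_rfl hx.2
  have huIcc : uIcc (0:ℝ) x = Icc (0:ℝ) x := uIcc_of_le hx.1
  constructor
  · set sv := avg h hp (emb h (a, P)) with hsv
    set hf : ℝ → ℝ := fun y => Ib y * (μ - β₀ * Sb y) - DS * Sb y + DS / m * sv * y with hhf
    set hf' : ℝ → ℝ := fun y =>
      Q y * (μ - β₀ * Sb y) - β₀ * (Ib y * P y) - DS * P y + DS / m * sv with hhf'
    have hder : ∀ y : ℝ, HasDerivAt hf (hf' y) y := by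
      intro y
      have h1 : HasDerivAt (fun y => Ib y * (μ - β₀ * Sb y))
          (Q y * (μ - β₀ * Sb y) + Ib y * (0 - β₀ * P y)) y :=
        (hIb y).mul ((hasDerivAt_const y μ).sub ((hSb y).const_mul β₀))
      have h2 : HasDerivAt (fun y => DS * Sb y) (DS * P y) y := (hSb y).const_mul DS
      have h3 : HasDerivAt (fun y => DS / m * sv * y) (DS / m * sv) y := by
        simpa using (hasDerivAt_id y).const_mul (DS / m * sv)
      have := (h1.sub h2).add h3
      refine this.congr_deriv ?_
      simp [hhf']; ring
    have hcontSb : Continuous Sb := continuous_const.add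
      (intervalIntegral.continuous_primitive (fun a b => P.continuous.intervalIntegrable a b) 0)
    have hcontIb : Continuous Ib := continuous_const.add
      (intervalIntegral.continuous_primitive (fun a b => Q.continuous.intervalIntegrable a b) 0)
    have hcont' : Continuous hf' := by
      apply Continuous.add
      apply Continuous.sub
      apply Continuous.sub
      · exact Q.continuous.mul (continuous_const.sub (continuous_const.mul hcontSb))
      · exact continuous_const.mul (hcontIb.mul P.continuous)
      · exact continuous_const.mul P.continuous
      · exact continuous_const
    have hint : ∫ z in (0:ℝ)..x, (G m μ β₀ DS DI h hp ((a,P),(b,Q))).1.2 z = hf x - hf 0 := by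
      rw [show (∫ z in (0:ℝ)..x, (G m μ β₀ DS DI h hp ((a,P),(b,Q))).1.2 z)
          = ∫ z in (0:ℝ)..x, hf' z from ?_]
      · exact intervalIntegral.integral_eq_sub_of_hasDerivAt
          (fun y _ => hder y) (hcont'.intervalIntegrable _ _)
      · apply intervalIntegral.integral_congr
        intro z hz
        rw [huIcc] at hz
        have hz' := hsubset hz
        simp only [G, BoundedContinuousFunction.coe_add, BoundedContinuousFunction.coe_sub,
          BoundedContinuousFunction.coe_mul, BoundedContinuousFunction.coe_smul,
          BoundedContinuousFunction.coe_one, Pi.add_apply, Pi.sub_apply, Pi.mul_apply,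
          Pi.smul_apply, Pi.one_apply, smul_eq_mul]
        rw [hSeq z hz', hIeq z hz', hhf']
        simp [← hsv]
        try ring
    rw [emb_apply, cl_eq hx, hint, hSeq x hx, hIeq x hx]
    simp only [G]
    rw [hhf]
    simp only [hSb0, hIb0]
    field_simp
    ring
  · set sv := avg h hp (emb h (b, Q)) with hsv
    set hf : ℝ → ℝ := fun y => Ib y * (-μ + β₀ * Sb y) - DI * Ib y + DI / m * sv * y with hhf
    set hf' : ℝ → ℝ := fun y =>
      Q y * (-μ + β₀ * Sb y) + β₀ * (Ib y * P y) - DI * Q y + DI / m * sv with hhf'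
    have hder : ∀ y : ℝ, HasDerivAt hf (hf' y) y := by
      intro y
      have h1 : HasDerivAt (fun y => Ib y * (-μ + β₀ * Sb y))
          (Q y * (-μ + β₀ * Sb y) + Ib y * (0 + β₀ * P y)) y :=
        (hIb y).mul ((hasDerivAt_const y (-μ)).add ((hSb y).const_mul β₀))
      have h2 : HasDerivAt (fun y => DI * Ib y) (DI * Q y) y := (hIb y).const_mul DI
      have h3 : HasDerivAt (fun y => DI / m * sv * y) (DI / m * sv) y := by
        simpa using (hasDerivAt_id y).const_mul (DI / m * sv)
      have := (h1.sub h2).add h3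
      refine this.congr_deriv ?_
      simp [hhf']; ring
    have hcontSb : Continuous Sb := continuous_const.add
      (intervalIntegral.continuous_primitive (fun a b => P.continuous.intervalIntegrable a b) 0)
    have hcontIb : Continuous Ib := continuous_const.add
      (intervalIntegral.continuous_primitive (fun a b => Q.continuous.intervalIntegrable a b) 0)
    have hcont' : Continuous hf' := by
      apply Continuous.add
      apply Continuous.sub
      apply Continuous.add
      · exact Q.continuous.mul (continuous_const.add (continuous_const.mul hcontSb))
      · exact continuous_const.mul (hcontIb.mul P.continuous)
      · exact continuous_const.mul Q.continuous
      · exact continuous_const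
    have hint : ∫ z in (0:ℝ)..x, (G m μ β₀ DS DI h hp ((a,P),(b,Q))).2.2 z = hf x - hf 0 := by
      rw [show (∫ z in (0:ℝ)..x, (G m μ β₀ DS DI h hp ((a,P),(b,Q))).2.2 z)
          = ∫ z in (0:ℝ)..x, hf' z from ?_]
      · exact intervalIntegral.integral_eq_sub_of_hasDerivAt
          (fun y _ => hder y) (hcont'.intervalIntegrable _ _)
      · apply intervalIntegral.integral_congr
        intro z hz
        rw [huIcc] at hz
        have hz' := hsubset hz
        simp only [G, BoundedContinuousFunction.coe_add, BoundedContinuousFunction.coe_sub,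
          BoundedContinuousFunction.coe_mul, BoundedContinuousFunction.coe_smul,
          BoundedContinuousFunction.coe_one, Pi.add_apply, Pi.sub_apply, Pi.mul_apply,
          Pi.smul_apply, Pi.one_apply, smul_eq_mul]
        rw [hSeq z hz', hIeq z hz', hhf']
        simp [← hsv]
        try ring
    rw [emb_apply, cl_eq hx, hint, hSeq x hx, hIeq x hx]
    simp only [G]
    rw [hhf]
    simp only [hSb0, hIb0]
    field_simp
    ring


lemma abs_sub_le_of_mem_uIoc {x₀ x y : ℝ} (hy : y ∈ Set.uIoc x₀ x) : |y - x₀| ≤ |x - x₀| := by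
  rcases Set.mem_uIoc.1 hy with ⟨h1, h2⟩ | ⟨h1, h2⟩
  · rw [abs_of_nonneg (by linarith)]
    calc y - x₀ ≤ x - x₀ := by linarith
      _ ≤ |x - x₀| := le_abs_self _
  · rw [abs_of_nonpos (by linarith)]
    calc -(y - x₀) = x₀ - y := by ring
      _ ≤ x₀ - x := by linarith
      _ ≤ |x - x₀| := by rw [abs_sub_comm]; exact le_abs_self _

lemma mem_uIcc_of_mem_Icc {c d t₀ t : ℝ} (h0 : t₀ ∈ Icc c d) (h1 : t ∈ Icc c d) :
    uIcc t₀ t ⊆ Icc c d :=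
  Set.OrdConnected.uIcc_subset Set.ordConnected_Icc h0 h1

/-- Joint C¹ regularity from integral representation in `x` and continuously-varying
derivative in `t`. -/
lemma contDiffOn_of_reps {f g₁ g₂ : ℝ → ℝ → ℝ} {X T a b : ℝ} (hX : 0 < X) (hT : 0 < T)
    (hsub : Icc (0:ℝ) T ⊆ Ioo a b)
    (hg₁ : ContinuousOn (fun q : ℝ × ℝ => g₁ q.1 q.2) (univ ×ˢ Ioo a b))
    (hg₂ : ContinuousOn (fun q : ℝ × ℝ => g₂ q.1 q.2) (univ ×ˢ Ioo a b))
    (hrep : ∀ t ∈ Ioo a b, ∀ x ∈ Icc (0:ℝ) X, ∀ x₀ ∈ Icc (0:ℝ) X,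
        f x t - f x₀ t = ∫ y in x₀..x, g₁ y t)
    (hder : ∀ x₀ ∈ Icc (0:ℝ) X, ∀ t ∈ Ioo a b, HasDerivAt (f x₀) (g₂ x₀ t) t) :
    ContDiffOn ℝ 1 (Function.uncurry f) (Icc 0 X ×ˢ Icc 0 T) := by
  set Rec : Set (ℝ × ℝ) := Icc (0:ℝ) X ×ˢ Icc (0:ℝ) T with hRec
  have hopen : IsOpen ((univ : Set ℝ) ×ˢ Ioo a b) := isOpen_univ.prod isOpen_Ioo
  have hRecSub : Rec ⊆ (univ : Set ℝ) ×ˢ Ioo a b := fun q hq => ⟨trivial, hsub hq.2⟩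
  set L : ℝ × ℝ → (ℝ × ℝ →L[ℝ] ℝ) := fun q =>
    (ContinuousLinearMap.fst ℝ ℝ ℝ).smulRight (g₁ q.1 q.2)
      + (ContinuousLinearMap.snd ℝ ℝ ℝ).smulRight (g₂ q.1 q.2) with hL
  -- continuity of slices
  have hg₁slice : ∀ t ∈ Ioo a b, Continuous (fun y => g₁ y t) := by
    intro t ht
    rw [← continuousOn_univ]
    exact hg₁.comp ((continuous_id.prodMk continuous_const).continuousOn)
      (fun y _ => ⟨trivial, ht⟩)
  have hg₂slice : ∀ x : ℝ, ContinuousOn (fun τ => g₂ x τ) (Ioo a b) := by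
    intro x
    exact hg₂.comp ((continuous_const.prodMk continuous_id).continuousOn)
      (fun τ hτ => ⟨trivial, hτ⟩)
  -- the main pointwise differentiability claim
  have hfd : ∀ q ∈ Rec, HasFDerivWithinAt (Function.uncurry f) (L q) Rec q := by
    rintro ⟨x₀, t₀⟩ hq
    have hx₀ : x₀ ∈ Icc (0:ℝ) X := hq.1
    have ht₀T : t₀ ∈ Icc (0:ℝ) T := hq.2
    have ht₀ : t₀ ∈ Ioo a b := hsub ht₀T
    have hc₁ : ContinuousAt (fun q : ℝ × ℝ => g₁ q.1 q.2) (x₀, t₀) :=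
      hg₁.continuousAt (hopen.mem_nhds ⟨trivial, ht₀⟩)
    have hc₂ : ContinuousAt (fun τ => g₂ x₀ τ) t₀ :=
      (hg₂.continuousAt (hopen.mem_nhds ⟨trivial, ht₀⟩)).comp
        (Continuous.prodMk_right x₀).continuousAt
    refine HasFDerivWithinAt.of_isLittleO (Asymptotics.isLittleO_iff.mpr ?_)
    intro c hc
    obtain ⟨δ₁, hδ₁, hδ₁p⟩ := Metric.continuousAt_iff.1 hc₁ (c/2) (by linarith)
    obtain ⟨δ₂, hδ₂, hδ₂p⟩ := Metric.continuousAt_iff.1 hc₂ (c/2) (by linarith)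
    have hball : ∀ᶠ q' in nhdsWithin (x₀, t₀) Rec, dist q' (x₀, t₀) < min δ₁ δ₂ :=
      eventually_nhdsWithin_of_eventually_nhds
        (Metric.eventually_nhds_iff.2 ⟨min δ₁ δ₂, lt_min hδ₁ hδ₂, fun {q'} h => h⟩)
    filter_upwards [hball, self_mem_nhdsWithin] with q' hq'd hq'R
    obtain ⟨x, t⟩ := q'
    have hxI : x ∈ Icc (0:ℝ) X := hq'R.1
    have htT : t ∈ Icc (0:ℝ) T := hq'R.2
    have htI : t ∈ Ioo a b := hsub htT
    have hdx : |x - x₀| ≤ dist ((x,t)) ((x₀,t₀)) := by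
      rw [Prod.dist_eq]; exact le_max_of_le_left (le_of_eq (Real.dist_eq x x₀).symm)
    have hdt : |t - t₀| ≤ dist ((x,t)) ((x₀,t₀)) := by
      rw [Prod.dist_eq]; exact le_max_of_le_right (le_of_eq (Real.dist_eq t t₀).symm)
    -- x-part
    have hint₁ : IntervalIntegrable (fun y => g₁ y t) MeasureTheory.volume x₀ x :=
      (hg₁slice t htI).intervalIntegrable _ _
    have key1 : f x t - f x₀ t = ∫ y in x₀..x, g₁ y t := hrep t htI x hxI x₀ hx₀
    have key1' : f x t - f x₀ t - (x - x₀) * g₁ x₀ t₀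
        = ∫ y in x₀..x, (g₁ y t - g₁ x₀ t₀) := by
      rw [intervalIntegral.integral_sub hint₁ (intervalIntegrable_const (c := g₁ x₀ t₀)),
        intervalIntegral.integral_const, ← key1, smul_eq_mul]
    have bound1 : ‖f x t - f x₀ t - (x - x₀) * g₁ x₀ t₀‖ ≤ c/2 * |x - x₀| := by
      rw [key1']
      have := intervalIntegral.norm_integral_le_of_norm_le_const
        (C := c/2) (f := fun y => g₁ y t - g₁ x₀ t₀) (a := x₀) (b := x) ?_
      · calc ‖∫ y in x₀..x, (g₁ y t - g₁ x₀ t₀)‖ ≤ c/2 * |x - x₀| := this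
          _ = c/2 * |x - x₀| := rfl
      · intro y hy
        have h1 : dist ((y,t)) ((x₀,t₀)) < δ₁ := by
          rw [Prod.dist_eq]
          apply max_lt
          · rw [Real.dist_eq]
            exact lt_of_le_of_lt ((abs_sub_le_of_mem_uIoc hy).trans hdx)
              (lt_of_lt_of_le hq'd (min_le_left _ _))
          · rw [Real.dist_eq]
            exact lt_of_le_of_lt hdt (lt_of_lt_of_le hq'd (min_le_left _ _))
        have := hδ₁p h1
        rw [Real.dist_eq] at this
        exact le_of_lt this
    -- t-part
    have huIcc : uIcc t₀ t ⊆ Ioo a b := fun τ hτ => hsub (mem_uIcc_of_mem_Icc ht₀T htT hτ)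
    have hint₂ : IntervalIntegrable (fun τ => g₂ x₀ τ) MeasureTheory.volume t₀ t :=
      ((hg₂slice x₀).mono huIcc).intervalIntegrable
    have key2 : f x₀ t - f x₀ t₀ = ∫ τ in t₀..t, g₂ x₀ τ :=
      (intervalIntegral.integral_eq_sub_of_hasDerivAt
        (fun τ hτ => hder x₀ hx₀ τ (huIcc hτ)) hint₂).symm
    have key2' : f x₀ t - f x₀ t₀ - (t - t₀) * g₂ x₀ t₀
        = ∫ τ in t₀..t, (g₂ x₀ τ - g₂ x₀ t₀) := by
      rw [intervalIntegral.integral_sub hint₂ (intervalIntegrable_const (c := g₂ x₀ t₀)),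
        intervalIntegral.integral_const, ← key2, smul_eq_mul]
    have bound2 : ‖f x₀ t - f x₀ t₀ - (t - t₀) * g₂ x₀ t₀‖ ≤ c/2 * |t - t₀| := by
      rw [key2']
      apply intervalIntegral.norm_integral_le_of_norm_le_const
      intro τ hτ
      have h1 : dist τ t₀ < δ₂ := by
        rw [Real.dist_eq]
        exact lt_of_le_of_lt ((abs_sub_le_of_mem_uIoc hτ).trans hdt)
          (lt_of_lt_of_le hq'd (min_le_right _ _))
      have := hδ₂p h1
      rw [Real.dist_eq] at this
      exact le_of_lt this
    -- combine
    have hLapp : L (x₀, t₀) ((x,t) - (x₀,t₀)) = (x - x₀) * g₁ x₀ t₀ + (t - t₀) * g₂ x₀ t₀ := by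
      simp [hL, ContinuousLinearMap.smulRight_apply, smul_eq_mul]
    have hsplit : Function.uncurry f (x,t) - Function.uncurry f (x₀,t₀)
        - L (x₀, t₀) ((x,t) - (x₀,t₀))
        = (f x t - f x₀ t - (x - x₀) * g₁ x₀ t₀) + (f x₀ t - f x₀ t₀ - (t - t₀) * g₂ x₀ t₀) := by
      rw [hLapp]; simp [Function.uncurry]; ring
    rw [hsplit]
    calc ‖(f x t - f x₀ t - (x - x₀) * g₁ x₀ t₀) + (f x₀ t - f x₀ t₀ - (t - t₀) * g₂ x₀ t₀)‖
        ≤ ‖f x t - f x₀ t - (x - x₀) * g₁ x₀ t₀‖ + ‖f x₀ t - f x₀ t₀ - (t - t₀) * g₂ x₀ t₀‖ :=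
          norm_add_le _ _
      _ ≤ c/2 * |x - x₀| + c/2 * |t - t₀| := add_le_add bound1 bound2
      _ ≤ c/2 * ‖(x,t) - (x₀,t₀)‖ + c/2 * ‖(x,t) - (x₀,t₀)‖ := by
          have h1 : |x - x₀| ≤ ‖(x,t) - (x₀,t₀)‖ := by
            rw [← dist_eq_norm]; exact hdx
          have h2 : |t - t₀| ≤ ‖(x,t) - (x₀,t₀)‖ := by
            rw [← dist_eq_norm]; exact hdt
          have hc2 : (0:ℝ) ≤ c/2 := by linarith
          exact add_le_add (mul_le_mul_of_nonneg_left h1 hc2) (mul_le_mul_of_nonneg_left h2 hc2)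
      _ = c * ‖(x,t) - (x₀,t₀)‖ := by ring
  -- assemble ContDiffOn
  have hudiff : UniqueDiffOn ℝ Rec := (uniqueDiffOn_Icc hX).prod (uniqueDiffOn_Icc hT)
  have hdiffOn : DifferentiableOn ℝ (Function.uncurry f) Rec :=
    fun q hq => ((hfd q hq).differentiableWithinAt)
  have hfderiv : ∀ q ∈ Rec, fderivWithin ℝ (Function.uncurry f) Rec q = L q :=
    fun q hq => (hfd q hq).fderivWithin (hudiff q hq)
  have hLcont : ContinuousOn L Rec := by
    have c1 : ContinuousOn (fun q : ℝ × ℝ =>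
        (ContinuousLinearMap.smulRightL ℝ (ℝ × ℝ) ℝ (ContinuousLinearMap.fst ℝ ℝ ℝ))
          (g₁ q.1 q.2)) Rec :=
      ((ContinuousLinearMap.smulRightL ℝ (ℝ × ℝ) ℝ
        (ContinuousLinearMap.fst ℝ ℝ ℝ)).continuous).comp_continuousOn (hg₁.mono hRecSub)
    have c2 : ContinuousOn (fun q : ℝ × ℝ =>
        (ContinuousLinearMap.smulRightL ℝ (ℝ × ℝ) ℝ (ContinuousLinearMap.snd ℝ ℝ ℝ))
          (g₂ q.1 q.2)) Rec :=
      ((ContinuousLinearMap.smulRightL ℝ (ℝ × ℝ) ℝ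
        (ContinuousLinearMap.snd ℝ ℝ ℝ)).continuous).comp_continuousOn (hg₂.mono hRecSub)
    exact c1.add c2
  have : ContDiffOn ℝ ((0:WithTop ℕ∞) + 1) (Function.uncurry f) Rec := by
    apply contDiffOn_succ_of_fderivWithin hdiffOn
    · intro h; exact absurd h (by simp)
    · rw [contDiffOn_zero]
      exact hLcont.congr hfderiv
  simpa using this

/-- bounded continuous extension of `f ∘ cl` -/
def clComp (h : 0 ≤ xmax) (f : ℝ → ℝ) (hf : Continuous f) : A :=
  BoundedContinuousFunction.ofNormedAddCommGroup (fun x => f (cl xmax x))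
    (hf.comp (continuous_cl xmax))
    (Classical.choose (isCompact_Icc.exists_bound_of_continuousOn
      (s := Icc (0:ℝ) xmax) hf.continuousOn))
    (fun x => Classical.choose_spec (isCompact_Icc.exists_bound_of_continuousOn
      (s := Icc (0:ℝ) xmax) hf.continuousOn) (cl xmax x) (cl_mem h x))

lemma clComp_apply (h : 0 ≤ xmax) (f : ℝ → ℝ) (hf : Continuous f) (x : ℝ) :
    clComp h f hf x = f (cl xmax x) := rfl

variable {T : ℝ}

/-- the curve in `A` associated with a two-variable function -/
def curve2 (h : 0 ≤ xmax) (hT : 0 ≤ T) (S : ℝ → ℝ → ℝ)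
    (hc : ContinuousOn (Function.uncurry S) (Icc 0 xmax ×ˢ Icc 0 T)) : ℝ → A := fun t =>
  BoundedContinuousFunction.ofNormedAddCommGroup (fun x => S (cl xmax x) (cl T t))
    (hc.comp_continuous ((continuous_cl xmax).prodMk continuous_const)
      (fun x => ⟨cl_mem h x, cl_mem hT t⟩))
    (Classical.choose ((isCompact_Icc.prod isCompact_Icc).exists_bound_of_continuousOn hc))
    (fun x => Classical.choose_spec
      ((isCompact_Icc.prod isCompact_Icc).exists_bound_of_continuousOn hc)
      (cl xmax x, cl T t) ⟨cl_mem h x, cl_mem hT t⟩)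

lemma curve2_apply (h : 0 ≤ xmax) (hT : 0 ≤ T) (S : ℝ → ℝ → ℝ)
    (hc : ContinuousOn (Function.uncurry S) (Icc 0 xmax ×ˢ Icc 0 T)) (t x : ℝ) :
    curve2 h hT S hc t x = S (cl xmax x) (cl T t) := rfl

/-- continuity of the curve associated with a continuous two-variable function -/
lemma curve2_continuousOn (h : 0 ≤ xmax) (hT : 0 ≤ T) (S : ℝ → ℝ → ℝ)
    (hc : ContinuousOn (Function.uncurry S) (Icc 0 xmax ×ˢ Icc 0 T)) :
    ContinuousOn (curve2 h hT S hc) (Icc 0 T) := by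
  have huc := (isCompact_Icc.prod isCompact_Icc).uniformContinuousOn_of_continuous hc
  rw [Metric.uniformContinuousOn_iff] at huc
  intro t₀ ht₀
  rw [Metric.continuousWithinAt_iff]
  intro ε hε
  obtain ⟨δ, hδ, hδp⟩ := huc (ε/2) (by linarith)
  refine ⟨δ, hδ, fun {t} ht hdt => ?_⟩
  have hle : dist (curve2 h hT S hc t) (curve2 h hT S hc t₀) ≤ ε/2 := by
    rw [BoundedContinuousFunction.dist_le (by linarith)]
    intro x
    have h1 : ((cl xmax x, cl T t) : ℝ × ℝ) ∈ Icc (0:ℝ) xmax ×ˢ Icc (0:ℝ) T :=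
      ⟨cl_mem h x, cl_mem hT t⟩
    have h2 : ((cl xmax x, cl T t₀) : ℝ × ℝ) ∈ Icc (0:ℝ) xmax ×ˢ Icc (0:ℝ) T :=
      ⟨cl_mem h x, cl_mem hT t₀⟩
    have hd : dist ((cl xmax x, cl T t) : ℝ × ℝ) ((cl xmax x, cl T t₀) : ℝ × ℝ) < δ := by
      rw [Prod.dist_eq, cl_eq ht, cl_eq ht₀]
      apply max_lt (by simpa using hδ) hdt
    exact (hδp _ h1 _ h2 hd).le
  linarith [hle]


/-- Differentiability of a curve in `A` coming from a pointwise-in-`x` differentiable family. -/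
lemma hasDerivWithinAt_curve {T : ℝ} {W : ℝ → A} {V : A} {Sf : ℝ → ℝ → ℝ}
    {rhs : ℝ × ℝ → ℝ} {t : ℝ} (ht : t ∈ Ico (0:ℝ) T) (h : 0 ≤ xmax)
    (hW : ∀ τ ∈ Icc (0:ℝ) T, ∀ x : ℝ, W τ x = Sf (cl xmax x) τ)
    (hrhs : ContinuousOn rhs (Icc 0 xmax ×ˢ Icc 0 T))
    (hder : ∀ y ∈ Icc (0:ℝ) xmax, ∀ τ ∈ Icc (0:ℝ) T, HasDerivAt (Sf y) (rhs (y, τ)) τ)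
    (hV : ∀ x : ℝ, V x = rhs (cl xmax x, t)) :
    HasDerivWithinAt W V (Ici t) t := by
  have hRc : IsCompact (Icc (0:ℝ) xmax ×ˢ Icc (0:ℝ) T) := isCompact_Icc.prod isCompact_Icc
  have huc := Metric.uniformContinuousOn_iff.1 (hRc.uniformContinuousOn_of_continuous hrhs)
  have htT : t ∈ Icc (0:ℝ) T := ⟨ht.1, ht.2.le⟩
  rw [hasDerivWithinAt_iff_isLittleO]
  rw [Asymptotics.isLittleO_iff]
  intro c hc
  obtain ⟨δ, hδ, hδp⟩ := huc c hc
  have hev : ∀ᶠ t' in nhdsWithin t (Ici t), dist t' t < min δ (T - t) :=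
    eventually_nhdsWithin_of_eventually_nhds
      (Metric.eventually_nhds_iff.2 ⟨min δ (T - t), lt_min hδ (by linarith [ht.2]), fun {hh} h2 => h2⟩)
  filter_upwards [hev, self_mem_nhdsWithin] with t' hd' ht'
  have habs : |t' - t| < min δ (T - t) := by rwa [Real.dist_eq] at hd'
  have ht'T : t' ∈ Icc (0:ℝ) T := by
    constructor
    · exact le_trans ht.1 ht'
    · have h1 : t' - t ≤ |t' - t| := le_abs_self _
      have h2 : |t' - t| < T - t := lt_of_lt_of_le habs (min_le_right _ _)
      linarith
  have hsub2 : uIcc t t' ⊆ Icc (0:ℝ) T := mem_uIcc_of_mem_Icc htT ht'T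
  have hpt : ∀ x : ℝ, ‖W t' x - W t x - (t' - t) * V x‖ ≤ c * |t' - t| := by
    intro x
    set y := cl xmax x with hy_def
    have hy : y ∈ Icc (0:ℝ) xmax := cl_mem h x
    have hcont : ContinuousOn (fun τ => rhs (y, τ)) (Icc (0:ℝ) T) :=
      hrhs.comp (Continuous.prodMk_right y).continuousOn (fun τ hτ => ⟨hy, hτ⟩)
    have hint : IntervalIntegrable (fun τ => rhs (y, τ)) MeasureTheory.volume t t' :=
      (hcont.mono hsub2).intervalIntegrable
    have hftc : Sf y t' - Sf y t = ∫ τ in t..t', rhs (y, τ) :=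
      (intervalIntegral.integral_eq_sub_of_hasDerivAt
        (fun τ hτ => hder y hy τ (hsub2 hτ)) hint).symm
    have hsplit : W t' x - W t x - (t' - t) * V x
        = ∫ τ in t..t', (rhs (y, τ) - rhs (y, t)) := by
      rw [hW t' ht'T x, hW t htT x, hV x,
        intervalIntegral.integral_sub hint (intervalIntegrable_const (c := rhs (y, t))),
        intervalIntegral.integral_const, ← hftc, smul_eq_mul, ← hy_def]
      try ring
    rw [hsplit]
    apply intervalIntegral.norm_integral_le_of_norm_le_const
    intro τ hτ
    have hτ' : τ ∈ Icc (0:ℝ) T := hsub2 (uIoc_subset_uIcc hτ)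
    have hd : dist ((y, τ) : ℝ × ℝ) ((y, t) : ℝ × ℝ) < δ := by
      rw [Prod.dist_eq]
      apply max_lt (by simpa using hδ)
      rw [Real.dist_eq]
      exact lt_of_le_of_lt (abs_sub_le_of_mem_uIoc hτ)
        (lt_of_lt_of_le habs (min_le_left _ _))
    have := hδp _ ⟨hy, hτ'⟩ _ ⟨hy, htT⟩ hd
    rw [Real.dist_eq] at this
    exact this.le
  have hnorm : ‖W t' - W t - (t' - t) • V‖ ≤ c * |t' - t| := by
    rw [BoundedContinuousFunction.norm_le (by positivity)]
    intro x
    have : (W t' - W t - (t' - t) • V) x = W t' x - W t x - (t' - t) * V x := by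
      simp [BoundedContinuousFunction.coe_sub, BoundedContinuousFunction.coe_smul]
    rw [this]
    exact hpt x
  calc ‖W t' - W t - (t' - t) • V‖ ≤ c * |t' - t| := hnorm
    _ = c * ‖t' - t‖ := by rw [Real.norm_eq_abs]

/-- Any solution of the system gives rise to a solution of the Banach-space ODE for `F2`. -/
lemma sol_curve (hxm : 0 < xmax) (hT : 0 < T)
    (hp : IntervalIntegrable p MeasureTheory.volume 0 xmax)
    (S I S₀ I₀ : ℝ → ℝ → ℝ) (S₀' I₀' : ℝ → ℝ)
    (hsol : IsSolutionC xmax m μ β₀ DS DI T p S₀' I₀' S I) :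
    ∃ β : ℝ → A × A,
      (∀ t ∈ Icc (0:ℝ) T, ∀ x, ((β t).1 x = S (cl xmax x) t ∧ (β t).2 x = I (cl xmax x) t)) ∧
      ContinuousOn β (Icc 0 T) ∧
      (∀ t ∈ Ico (0:ℝ) T,
        HasDerivWithinAt β (F2 m μ β₀ DS DI hxm.le hp (β t)) (Ici t) t) ∧
      (∀ x : ℝ, (β 0).1 x = S₀' (cl xmax x) ∧ (β 0).2 x = I₀' (cl xmax x)) := by
  obtain ⟨hSc, hIc, hSd, hId, hS0i, hI0i⟩ := hsol
  have h : (0:ℝ) ≤ xmax := hxm.le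
  have hT0 : (0:ℝ) ≤ T := hT.le
  set βS := curve2 h hT0 S hSc.continuousOn with hβS
  set βI := curve2 h hT0 I hIc.continuousOn with hβI
  set β : ℝ → A × A := fun t => (βS t, βI t) with hβ
  have hevalS : ∀ t ∈ Icc (0:ℝ) T, ∀ x : ℝ, βS t x = S (cl xmax x) t := by
    intro t ht x; rw [hβS, curve2_apply, cl_eq ht]
  have hevalI : ∀ t ∈ Icc (0:ℝ) T, ∀ x : ℝ, βI t x = I (cl xmax x) t := by
    intro t ht x; rw [hβI, curve2_apply, cl_eq ht]
  have havgS : ∀ t ∈ Icc (0:ℝ) T, avg h hp (βS t) = ∫ y in (0:ℝ)..xmax, S y t * p y := by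
    intro t ht
    rw [avg_apply]
    apply intervalIntegral.integral_congr
    intro y hy
    rw [uIcc_of_le h] at hy
    show (βS t) y * p y = S y t * p y
    rw [hevalS t ht y, cl_eq hy]
  have havgI : ∀ t ∈ Icc (0:ℝ) T, avg h hp (βI t) = ∫ y in (0:ℝ)..xmax, I y t * p y := by
    intro t ht
    rw [avg_apply]
    apply intervalIntegral.integral_congr
    intro y hy
    rw [uIcc_of_le h] at hy
    show (βI t) y * p y = I y t * p y
    rw [hevalI t ht y, cl_eq hy]
  set rhsS : ℝ × ℝ → ℝ := fun q =>
    I q.1 q.2 * (μ - β₀ * S q.1 q.2) - DS * (S q.1 q.2 - q.1 / m * avg h hp (βS q.2)) with hrhsS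
  set rhsI : ℝ × ℝ → ℝ := fun q =>
    I q.1 q.2 * (-μ + β₀ * S q.1 q.2) - DI * (I q.1 q.2 - q.1 / m * avg h hp (βI q.2)) with hrhsI
  have hScont : ContinuousOn (fun q : ℝ × ℝ => S q.1 q.2) (Icc 0 xmax ×ˢ Icc 0 T) :=
    hSc.continuousOn
  have hIcont : ContinuousOn (fun q : ℝ × ℝ => I q.1 q.2) (Icc 0 xmax ×ˢ Icc 0 T) :=
    hIc.continuousOn
  have havgScont : ContinuousOn (fun q : ℝ × ℝ => avg h hp (βS q.2)) (Icc 0 xmax ×ˢ Icc 0 T) :=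
    (avg h hp).continuous.comp_continuousOn
      ((curve2_continuousOn h hT0 S hSc.continuousOn).comp continuousOn_snd
        (fun q hq => hq.2))
  have havgIcont : ContinuousOn (fun q : ℝ × ℝ => avg h hp (βI q.2)) (Icc 0 xmax ×ˢ Icc 0 T) :=
    (avg h hp).continuous.comp_continuousOn
      ((curve2_continuousOn h hT0 I hIc.continuousOn).comp continuousOn_snd
        (fun q hq => hq.2))
  have hrhsScont : ContinuousOn rhsS (Icc 0 xmax ×ˢ Icc 0 T) := by
    apply ContinuousOn.sub
    · exact hIcont.mul (continuousOn_const.sub (continuousOn_const.mul hScont))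
    · exact continuousOn_const.mul
        (hScont.sub ((continuousOn_fst.div_const m).mul havgScont))
  have hrhsIcont : ContinuousOn rhsI (Icc 0 xmax ×ˢ Icc 0 T) := by
    apply ContinuousOn.sub
    · exact hIcont.mul (continuousOn_const.add (continuousOn_const.mul hScont))
    · exact continuousOn_const.mul
        (hIcont.sub ((continuousOn_fst.div_const m).mul havgIcont))
  have hderS : ∀ y ∈ Icc (0:ℝ) xmax, ∀ τ ∈ Icc (0:ℝ) T,
      HasDerivAt (S y) (rhsS (y, τ)) τ := by
    intro y hy τ hτ
    have := hSd y hy τ hτ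
    rw [hrhsS]
    simpa [havgS τ hτ] using this
  have hderI : ∀ y ∈ Icc (0:ℝ) xmax, ∀ τ ∈ Icc (0:ℝ) T,
      HasDerivAt (I y) (rhsI (y, τ)) τ := by
    intro y hy τ hτ
    have := hId y hy τ hτ
    rw [hrhsI]
    simpa [havgI τ hτ] using this
  refine ⟨β, ?_, ?_, ?_, ?_⟩
  · intro t ht x
    exact ⟨hevalS t ht x, hevalI t ht x⟩
  · exact (curve2_continuousOn h hT0 S hSc.continuousOn).prodMk
      (curve2_continuousOn h hT0 I hIc.continuousOn)
  · intro t ht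
    have htT : t ∈ Icc (0:ℝ) T := ⟨ht.1, ht.2.le⟩
    have hdS : HasDerivWithinAt βS (F2 m μ β₀ DS DI hxm.le hp (β t)).1 (Ici t) t := by
      apply hasDerivWithinAt_curve ht h hevalS hrhsScont hderS
      intro x
      rw [F2_fst_apply]
      simp only [hβ]
      rw [hevalS t htT x, hevalI t htT x, hrhsS]
    have hdI : HasDerivWithinAt βI (F2 m μ β₀ DS DI hxm.le hp (β t)).2 (Ici t) t := by
      apply hasDerivWithinAt_curve ht h hevalI hrhsIcont hderI
      intro x
      rw [F2_snd_apply]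
      simp only [hβ]
      rw [hevalS t htT x, hevalI t htT x, hrhsI]
    exact hdS.prodMk hdI
  · intro x
    have h0T : (0:ℝ) ∈ Icc (0:ℝ) T := ⟨le_refl _, hT0⟩
    constructor
    · rw [show (β 0).1 = βS 0 from rfl, hevalS 0 h0T x, hS0i (cl xmax x) (cl_mem h x)]
    · rw [show (β 0).2 = βI 0 from rfl, hevalI 0 h0T x, hI0i (cl xmax x) (cl_mem h x)]


/-- `F2` is Lipschitz on balls. -/
lemma F2_lipschitz (h : 0 ≤ xmax) (hp : IntervalIntegrable p MeasureTheory.volume 0 xmax)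
    {R : ℝ} (hR : 0 ≤ R) :
    ∃ K : NNReal, LipschitzOnWith K (F2 m μ β₀ DS DI h hp) (Metric.closedBall 0 R) := by
  set CA := ‖avg h hp‖ * ‖lin h m‖ with hCAdef
  have hCA : 0 ≤ CA := by positivity
  set Kr := |μ| + 2 * |β₀| * R + (|DS| + |DI|) * (1 + CA) with hKrdef
  have hKr0 : (0:ℝ) ≤ Kr := by positivity
  refine ⟨Real.toNNReal Kr, LipschitzOnWith.of_dist_le_mul ?_⟩
  intro u hu v hv
  rw [Real.coe_toNNReal _ hKr0]
  set d := dist u v with hd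
  have hd0 : 0 ≤ d := dist_nonneg
  have hdn : d = ‖u - v‖ := dist_eq_norm u v
  have n1 : ‖u.1 - v.1‖ ≤ d := by
    rw [hdn]; exact norm_fst_le (u - v)
  have n2 : ‖u.2 - v.2‖ ≤ d := by
    rw [hdn]; exact norm_snd_le (u - v)
  have nu1 : ‖u.1‖ ≤ R := (norm_fst_le u).trans (mem_closedBall_zero_iff.1 hu)
  have nv2 : ‖v.2‖ ≤ R := (norm_snd_le v).trans (mem_closedBall_zero_iff.1 hv)
  have hone : ‖(1 : A)‖ = 1 := norm_one
  -- generic inner bound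
  have inner_bound : ∀ z : A, ‖z - avg h hp z • lin h m‖ ≤ (1 + CA) * ‖z‖ := by
    intro z
    refine (norm_sub_le _ _).trans ?_
    have h1 : ‖avg h hp z • lin h m‖ ≤ CA * ‖z‖ := by
      refine (norm_smul_le (avg h hp z) (lin h m)).trans ?_
      calc ‖avg h hp z‖ * ‖lin h m‖ ≤ (‖avg h hp‖ * ‖z‖) * ‖lin h m‖ :=
            mul_le_mul_of_nonneg_right ((avg h hp).le_opNorm z) (norm_nonneg _)
        _ = CA * ‖z‖ := by rw [hCAdef]; ring
    calc ‖z‖ + ‖avg h hp z • lin h m‖ ≤ ‖z‖ + CA * ‖z‖ := add_le_add_right h1 _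
      _ = (1 + CA) * ‖z‖ := by ring
  have bnd1 : ‖(F2 m μ β₀ DS DI h hp u).1 - (F2 m μ β₀ DS DI h hp v).1‖ ≤ Kr * d := by
    have key1 : (F2 m μ β₀ DS DI h hp u).1 - (F2 m μ β₀ DS DI h hp v).1
        = (u.2 - v.2) * (μ • 1 - β₀ • u.1) + v.2 * (β₀ • (v.1 - u.1))
          - DS • ((u.1 - v.1) - avg h hp (u.1 - v.1) • lin h m) := by
      ext x
      simp only [F2, map_sub, BoundedContinuousFunction.coe_sub,
        BoundedContinuousFunction.coe_add, BoundedContinuousFunction.coe_mul,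
        BoundedContinuousFunction.coe_smul, BoundedContinuousFunction.coe_one,
        Pi.sub_apply, Pi.add_apply, Pi.mul_apply, Pi.smul_apply, Pi.one_apply, smul_eq_mul]
      ring
    rw [key1]
    have t1 : ‖(u.2 - v.2) * (μ • (1:A) - β₀ • u.1)‖ ≤ (|μ| + |β₀| * R) * d := by
      refine (norm_mul_le _ _).trans ?_
      have hf : ‖μ • (1:A) - β₀ • u.1‖ ≤ |μ| + |β₀| * R := by
        have a1 : ‖μ • (1:A)‖ ≤ |μ| := by
          rw [norm_smul μ (1:A), hone, mul_one, Real.norm_eq_abs]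
        have a2 : ‖β₀ • u.1‖ ≤ |β₀| * R := by
          refine (norm_smul_le β₀ u.1).trans ?_
          rw [Real.norm_eq_abs]
          exact mul_le_mul_of_nonneg_left nu1 (abs_nonneg _)
        exact (norm_sub_le _ _).trans (add_le_add a1 a2)
      calc ‖u.2 - v.2‖ * ‖μ • (1:A) - β₀ • u.1‖ ≤ d * (|μ| + |β₀| * R) :=
            mul_le_mul n2 hf (norm_nonneg _) hd0
        _ = (|μ| + |β₀| * R) * d := mul_comm _ _
    have t2 : ‖v.2 * (β₀ • (v.1 - u.1))‖ ≤ R * |β₀| * d := by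
      refine (norm_mul_le _ _).trans ?_
      have a3 : ‖β₀ • (v.1 - u.1)‖ ≤ |β₀| * ‖u.1 - v.1‖ := by
        refine (norm_smul_le β₀ (v.1 - u.1)).trans ?_
        rw [Real.norm_eq_abs, norm_sub_rev]
      refine le_trans (mul_le_mul_of_nonneg_left a3 (norm_nonneg v.2)) ?_
      calc ‖v.2‖ * (|β₀| * ‖u.1 - v.1‖) ≤ R * (|β₀| * d) := by
            apply mul_le_mul nv2 (mul_le_mul_of_nonneg_left n1 (abs_nonneg _))
              (by positivity) hR
        _ = R * |β₀| * d := by ring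
    have t3 : ‖DS • ((u.1 - v.1) - avg h hp (u.1 - v.1) • lin h m)‖ ≤ |DS| * ((1 + CA) * d) := by
      refine (norm_smul_le DS ((u.1 - v.1) - avg h hp (u.1 - v.1) • lin h m)).trans ?_
      rw [Real.norm_eq_abs]
      apply mul_le_mul_of_nonneg_left _ (abs_nonneg _)
      exact (inner_bound (u.1 - v.1)).trans (mul_le_mul_of_nonneg_left n1 (by positivity))
    calc ‖(u.2 - v.2) * (μ • 1 - β₀ • u.1) + v.2 * (β₀ • (v.1 - u.1))
          - DS • ((u.1 - v.1) - avg h hp (u.1 - v.1) • lin h m)‖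
        ≤ ‖(u.2 - v.2) * (μ • (1:A) - β₀ • u.1) + v.2 * (β₀ • (v.1 - u.1))‖
          + ‖DS • ((u.1 - v.1) - avg h hp (u.1 - v.1) • lin h m)‖ := norm_sub_le _ _
      _ ≤ ‖(u.2 - v.2) * (μ • (1:A) - β₀ • u.1)‖ + ‖v.2 * (β₀ • (v.1 - u.1))‖
          + ‖DS • ((u.1 - v.1) - avg h hp (u.1 - v.1) • lin h m)‖ :=
            add_le_add_left (norm_add_le _ _) _
      _ ≤ (|μ| + |β₀| * R) * d + R * |β₀| * d + |DS| * ((1 + CA) * d) :=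
            add_le_add (add_le_add t1 t2) t3
      _ ≤ Kr * d := by
          have hDI : 0 ≤ |DI| * ((1 + CA) * d) := by positivity
          nlinarith [hd0, hCA, abs_nonneg DS, abs_nonneg DI]
  have bnd2 : ‖(F2 m μ β₀ DS DI h hp u).2 - (F2 m μ β₀ DS DI h hp v).2‖ ≤ Kr * d := by
    have key2 : (F2 m μ β₀ DS DI h hp u).2 - (F2 m μ β₀ DS DI h hp v).2
        = (u.2 - v.2) * ((-μ) • 1 + β₀ • u.1) + v.2 * (β₀ • (u.1 - v.1))
          - DI • ((u.2 - v.2) - avg h hp (u.2 - v.2) • lin h m) := by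
      ext x
      simp only [F2, map_sub, BoundedContinuousFunction.coe_sub,
        BoundedContinuousFunction.coe_add, BoundedContinuousFunction.coe_mul,
        BoundedContinuousFunction.coe_smul, BoundedContinuousFunction.coe_one,
        Pi.sub_apply, Pi.add_apply, Pi.mul_apply, Pi.smul_apply, Pi.one_apply, smul_eq_mul]
      ring
    rw [key2]
    have t1 : ‖(u.2 - v.2) * ((-μ) • (1:A) + β₀ • u.1)‖ ≤ (|μ| + |β₀| * R) * d := by
      refine (norm_mul_le _ _).trans ?_
      have hf : ‖(-μ) • (1:A) + β₀ • u.1‖ ≤ |μ| + |β₀| * R := by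
        have a1 : ‖(-μ) • (1:A)‖ ≤ |μ| := by
          rw [norm_smul (-μ) (1:A), hone, mul_one, Real.norm_eq_abs, abs_neg]
        have a2 : ‖β₀ • u.1‖ ≤ |β₀| * R := by
          refine (norm_smul_le β₀ u.1).trans ?_
          rw [Real.norm_eq_abs]
          exact mul_le_mul_of_nonneg_left nu1 (abs_nonneg _)
        exact (norm_add_le _ _).trans (add_le_add a1 a2)
      calc ‖u.2 - v.2‖ * ‖(-μ) • (1:A) + β₀ • u.1‖ ≤ d * (|μ| + |β₀| * R) :=
            mul_le_mul n2 hf (norm_nonneg _) hd0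
        _ = (|μ| + |β₀| * R) * d := mul_comm _ _
    have t2 : ‖v.2 * (β₀ • (u.1 - v.1))‖ ≤ R * |β₀| * d := by
      refine (norm_mul_le _ _).trans ?_
      have a3 : ‖β₀ • (u.1 - v.1)‖ ≤ |β₀| * ‖u.1 - v.1‖ := by
        refine (norm_smul_le β₀ (u.1 - v.1)).trans ?_
        rw [Real.norm_eq_abs]
      refine le_trans (mul_le_mul_of_nonneg_left a3 (norm_nonneg v.2)) ?_
      calc ‖v.2‖ * (|β₀| * ‖u.1 - v.1‖) ≤ R * (|β₀| * d) := by
            apply mul_le_mul nv2 (mul_le_mul_of_nonneg_left n1 (abs_nonneg _))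
              (by positivity) hR
        _ = R * |β₀| * d := by ring
    have t3 : ‖DI • ((u.2 - v.2) - avg h hp (u.2 - v.2) • lin h m)‖ ≤ |DI| * ((1 + CA) * d) := by
      refine (norm_smul_le DI ((u.2 - v.2) - avg h hp (u.2 - v.2) • lin h m)).trans ?_
      rw [Real.norm_eq_abs]
      apply mul_le_mul_of_nonneg_left _ (abs_nonneg _)
      exact (inner_bound (u.2 - v.2)).trans (mul_le_mul_of_nonneg_left n2 (by positivity))
    calc ‖(u.2 - v.2) * ((-μ) • 1 + β₀ • u.1) + v.2 * (β₀ • (u.1 - v.1))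
          - DI • ((u.2 - v.2) - avg h hp (u.2 - v.2) • lin h m)‖
        ≤ ‖(u.2 - v.2) * ((-μ) • (1:A) + β₀ • u.1) + v.2 * (β₀ • (u.1 - v.1))‖
          + ‖DI • ((u.2 - v.2) - avg h hp (u.2 - v.2) • lin h m)‖ := norm_sub_le _ _
      _ ≤ ‖(u.2 - v.2) * ((-μ) • (1:A) + β₀ • u.1)‖ + ‖v.2 * (β₀ • (u.1 - v.1))‖
          + ‖DI • ((u.2 - v.2) - avg h hp (u.2 - v.2) • lin h m)‖ :=
            add_le_add_left (norm_add_le _ _) _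
      _ ≤ (|μ| + |β₀| * R) * d + R * |β₀| * d + |DI| * ((1 + CA) * d) :=
            add_le_add (add_le_add t1 t2) t3
      _ ≤ Kr * d := by
          have hDS : 0 ≤ |DS| * ((1 + CA) * d) := by positivity
          nlinarith [hd0, hCA, abs_nonneg DS, abs_nonneg DI]
  rw [Prod.dist_eq]
  apply max_le
  · rw [dist_eq_norm]; exact bnd1
  · rw [dist_eq_norm]; exact bnd2
end

end LEU

open LEU in
/-- Local existence and uniqueness for system `(C)` for arbitrary diffusion
coefficients `D_I, D_S > 0`: there exists `T > 0` such that `(C)` admits a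
solution on `J × [0,T]`, unique on `J × [0,T]`. -/
theorem local_existence_uniqueness
    (xmax m μ β₀ DS DI : ℝ) (p : ℝ → ℝ)
    (hxmax : 0 < xmax) (hm : 0 < m) (hμ : 0 < μ) (hβ₀ : 0 < β₀)
    (hDS : 0 < DS) (hDI : 0 < DI)
    (hp_nonneg : ∀ x ∈ Icc (0:ℝ) xmax, 0 ≤ p x) (hp0 : p 0 = 0)
    (hp_int : ∫ x in (0:ℝ)..xmax, p x = 1)
    (hm_def : m = ∫ x in (0:ℝ)..xmax, x * p x)
    (S₀ I₀ : ℝ → ℝ)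
    (hS₀ : ContDiff ℝ 1 S₀) (hI₀ : ContDiff ℝ 1 I₀)
    (hS₀nonneg : ∀ x ∈ Icc (0:ℝ) xmax, 0 ≤ S₀ x)
    (hI₀nonneg : ∀ x ∈ Icc (0:ℝ) xmax, 0 ≤ I₀ x)
    (hS₀zero : S₀ 0 = 0) (hI₀zero : I₀ 0 = 0)
    (hs₀pos : 0 < ∫ x in (0:ℝ)..xmax, S₀ x * p x)
    (hi₀pos : 0 < ∫ x in (0:ℝ)..xmax, I₀ x * p x) :
    ∃ T > (0:ℝ), ∃ S I : ℝ → ℝ → ℝ,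
      IsSolutionC xmax m μ β₀ DS DI T p S₀ I₀ S I ∧
      ∀ S' I' : ℝ → ℝ → ℝ, IsSolutionC xmax m μ β₀ DS DI T p S₀ I₀ S' I' →
        ∀ x ∈ Icc (0:ℝ) xmax, ∀ t ∈ Icc (0:ℝ) T, S' x t = S x t ∧ I' x t = I x t := by
  have h : (0:ℝ) ≤ xmax := hxmax.le
  have hpInt : IntervalIntegrable p MeasureTheory.volume 0 xmax := by
    by_contra hcon
    rw [intervalIntegral.integral_undef hcon] at hp_int
    exact zero_ne_one hp_int
  have hS₀' : Continuous (deriv S₀) := hS₀.continuous_deriv le_rfl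
  have hI₀' : Continuous (deriv I₀) := hI₀.continuous_deriv le_rfl
  set u₀ : EE := ((S₀ 0, clComp h (deriv S₀) hS₀'), (I₀ 0, clComp h (deriv I₀) hI₀')) with hu₀
  obtain ⟨α, hα0, ε, hε, hαd⟩ :=
    ContDiffAt.exists_forall_mem_closedBall_exists_eq_forall_mem_Ioo_hasDerivAt₀
      ((contDiff_G m μ β₀ DS DI h hpInt).contDiffAt (x := u₀)) (0:ℝ)
  set T := ε / 2 with hTdef
  have hT0 : 0 < T := by positivity
  have hIccIoo : Icc (0:ℝ) T ⊆ Ioo (0 - ε) (0 + ε) := by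
    intro t ht
    constructor
    · have := ht.1; simp only [zero_sub]; linarith
    · have := ht.2; simp only [zero_add]; rw [hTdef] at this; linarith
  have hαcont : ContinuousOn α (Ioo (0 - ε) (0 + ε)) :=
    fun t ht => (hαd t ht).continuousAt.continuousWithinAt
  set S : ℝ → ℝ → ℝ := fun x t => emb h ((α t).1) x with hSdef
  set I : ℝ → ℝ → ℝ := fun x t => emb h ((α t).2) x with hIdef
  -- pointwise time-derivatives
  have hSderivG : ∀ x : ℝ, ∀ t ∈ Ioo (0 - ε) (0 + ε),
      HasDerivAt (S x) (emb h ((G m μ β₀ DS DI h hpInt (α t)).1) x) t := by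
    intro x t ht
    have h2 := ((BoundedContinuousFunction.evalCLM ℝ x).comp
      ((emb h).comp (ContinuousLinearMap.fst ℝ (ℝ × A) (ℝ × A)))).hasFDerivAt.comp_hasDerivAt
      t (hαd t ht)
    exact h2
  have hIderivG : ∀ x : ℝ, ∀ t ∈ Ioo (0 - ε) (0 + ε),
      HasDerivAt (I x) (emb h ((G m μ β₀ DS DI h hpInt (α t)).2) x) t := by
    intro x t ht
    have h2 := ((BoundedContinuousFunction.evalCLM ℝ x).comp
      ((emb h).comp (ContinuousLinearMap.snd ℝ (ℝ × A) (ℝ × A)))).hasFDerivAt.comp_hasDerivAt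
      t (hαd t ht)
    exact h2
  have hSderiv : ∀ x ∈ Icc (0:ℝ) xmax, ∀ t ∈ Ioo (0 - ε) (0 + ε),
      HasDerivAt (S x)
        (I x t * (μ - β₀ * S x t) -
          DS * (S x t - x / m * ∫ y in (0:ℝ)..xmax, S y t * p y)) t := by
    intro x hx t ht
    have h3 := hSderivG x t ht
    rw [(key_identity m μ β₀ DS DI h hpInt (α t) hx).1] at h3
    exact h3
  have hIderiv : ∀ x ∈ Icc (0:ℝ) xmax, ∀ t ∈ Ioo (0 - ε) (0 + ε),
      HasDerivAt (I x)
        (I x t * (-μ + β₀ * S x t) -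
          DI * (I x t - x / m * ∫ y in (0:ℝ)..xmax, I y t * p y)) t := by
    intro x hx t ht
    have h3 := hIderivG x t ht
    rw [(key_identity m μ β₀ DS DI h hpInt (α t) hx).2] at h3
    exact h3
  -- joint C¹ regularity
  have hcontS : ContDiffOn ℝ 1 (Function.uncurry S) (Icc 0 xmax ×ˢ Icc 0 T) := by
    apply contDiffOn_of_reps (g₁ := fun y t => (α t).1.2 y)
      (g₂ := fun x t => emb h ((G m μ β₀ DS DI h hpInt (α t)).1) x) hxmax hT0 hIccIoo
    · show ContinuousOn ((fun p : A × ℝ => p.1 p.2) ∘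
          (fun q : ℝ × ℝ => (((α q.2).1.2 : A), q.1))) (univ ×ˢ Ioo (0 - ε) (0 + ε))
      apply continuous_eval.comp_continuousOn
      apply ContinuousOn.prodMk
      · exact (continuous_snd.comp continuous_fst).comp_continuousOn
          (hαcont.comp continuousOn_snd (fun q hq => hq.2))
      · exact continuousOn_fst
    · show ContinuousOn ((fun p : A × ℝ => p.1 p.2) ∘
          (fun q : ℝ × ℝ => ((emb h ((G m μ β₀ DS DI h hpInt (α q.2)).1) : A), q.1)))
          (univ ×ˢ Ioo (0 - ε) (0 + ε))
      apply continuous_eval.comp_continuousOn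
      apply ContinuousOn.prodMk
      · exact ((emb h).continuous.comp (continuous_fst.comp
          (contDiff_G m μ β₀ DS DI h hpInt).continuous)).comp_continuousOn
          (hαcont.comp continuousOn_snd (fun q hq => hq.2))
      · exact continuousOn_fst
    · intro t ht x hx x₀ hx₀
      show emb h ((α t).1) x - emb h ((α t).1) x₀ = _
      rw [emb_apply, emb_apply, cl_eq hx, cl_eq hx₀]
      have := intervalIntegral.integral_interval_sub_left
        (((α t).1.2.continuous.intervalIntegrable (μ := MeasureTheory.volume) 0 x))
        (((α t).1.2.continuous.intervalIntegrable (μ := MeasureTheory.volume) 0 x₀))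
      rw [← this]
      ring
    · intro x₀ hx₀ t ht
      exact hSderivG x₀ t ht
  have hcontI : ContDiffOn ℝ 1 (Function.uncurry I) (Icc 0 xmax ×ˢ Icc 0 T) := by
    apply contDiffOn_of_reps (g₁ := fun y t => (α t).2.2 y)
      (g₂ := fun x t => emb h ((G m μ β₀ DS DI h hpInt (α t)).2) x) hxmax hT0 hIccIoo
    · show ContinuousOn ((fun p : A × ℝ => p.1 p.2) ∘
          (fun q : ℝ × ℝ => (((α q.2).2.2 : A), q.1))) (univ ×ˢ Ioo (0 - ε) (0 + ε))
      apply continuous_eval.comp_continuousOn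
      apply ContinuousOn.prodMk
      · exact (continuous_snd.comp continuous_snd).comp_continuousOn
          (hαcont.comp continuousOn_snd (fun q hq => hq.2))
      · exact continuousOn_fst
    · show ContinuousOn ((fun p : A × ℝ => p.1 p.2) ∘
          (fun q : ℝ × ℝ => ((emb h ((G m μ β₀ DS DI h hpInt (α q.2)).2) : A), q.1)))
          (univ ×ˢ Ioo (0 - ε) (0 + ε))
      apply continuous_eval.comp_continuousOn
      apply ContinuousOn.prodMk
      · exact ((emb h).continuous.comp (continuous_snd.comp
          (contDiff_G m μ β₀ DS DI h hpInt).continuous)).comp_continuousOn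
          (hαcont.comp continuousOn_snd (fun q hq => hq.2))
      · exact continuousOn_fst
    · intro t ht x hx x₀ hx₀
      show emb h ((α t).2) x - emb h ((α t).2) x₀ = _
      rw [emb_apply, emb_apply, cl_eq hx, cl_eq hx₀]
      have := intervalIntegral.integral_interval_sub_left
        (((α t).2.2.continuous.intervalIntegrable (μ := MeasureTheory.volume) 0 x))
        (((α t).2.2.continuous.intervalIntegrable (μ := MeasureTheory.volume) 0 x₀))
      rw [← this]
      ring
    · intro x₀ hx₀ t ht
      exact hIderivG x₀ t ht
  -- initial conditions
  have hSinit : ∀ x ∈ Icc (0:ℝ) xmax, S x 0 = S₀ x := by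
    intro x hx
    show emb h ((α 0).1) x = S₀ x
    rw [hα0]
    rw [emb_apply, cl_eq hx]
    have hcongr : (∫ y in (0:ℝ)..x, (u₀.1.2 : ℝ → ℝ) y) = ∫ y in (0:ℝ)..x, deriv S₀ y := by
      apply intervalIntegral.integral_congr
      intro y hy
      rw [uIcc_of_le hx.1] at hy
      have hy' : y ∈ Icc (0:ℝ) xmax := ⟨hy.1, hy.2.trans hx.2⟩
      show deriv S₀ (cl xmax y) = deriv S₀ y
      rw [cl_eq hy']
    rw [hcongr, intervalIntegral.integral_deriv_eq_sub
      (fun y _ => (hS₀.differentiable one_ne_zero).differentiableAt)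
      (hS₀'.intervalIntegrable 0 x)]
    show S₀ 0 + (S₀ x - S₀ 0) = S₀ x
    ring
  have hIinit : ∀ x ∈ Icc (0:ℝ) xmax, I x 0 = I₀ x := by
    intro x hx
    show emb h ((α 0).2) x = I₀ x
    rw [hα0]
    rw [emb_apply, cl_eq hx]
    have hcongr : (∫ y in (0:ℝ)..x, (u₀.2.2 : ℝ → ℝ) y) = ∫ y in (0:ℝ)..x, deriv I₀ y := by
      apply intervalIntegral.integral_congr
      intro y hy
      rw [uIcc_of_le hx.1] at hy
      have hy' : y ∈ Icc (0:ℝ) xmax := ⟨hy.1, hy.2.trans hx.2⟩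
      show deriv I₀ (cl xmax y) = deriv I₀ y
      rw [cl_eq hy']
    rw [hcongr, intervalIntegral.integral_deriv_eq_sub
      (fun y _ => (hI₀.differentiable one_ne_zero).differentiableAt)
      (hI₀'.intervalIntegrable 0 x)]
    show I₀ 0 + (I₀ x - I₀ 0) = I₀ x
    ring
  have hsolC : IsSolutionC xmax m μ β₀ DS DI T p S₀ I₀ S I := by
    refine ⟨hcontS, hcontI, ?_, ?_, hSinit, hIinit⟩
    · intro x hx t ht
      exact hSderiv x hx t (hIccIoo ht)
    · intro x hx t ht
      exact hIderiv x hx t (hIccIoo ht)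
  refine ⟨T, hT0, S, I, hsolC, ?_⟩
  -- uniqueness
  intro S' I' hsol' x hx t ht
  obtain ⟨β, hβeval, hβcont, hβderiv, hβ0⟩ :=
    sol_curve m μ β₀ DS DI hxmax hT0 hpInt S I S I S₀ I₀ hsolC
  obtain ⟨β', hβ'eval, hβ'cont, hβ'deriv, hβ'0⟩ :=
    sol_curve m μ β₀ DS DI hxmax hT0 hpInt S' I' S' I' S₀ I₀ hsol'
  have h00 : β' 0 = β 0 := by
    apply Prod.ext
    · apply BoundedContinuousFunction.ext
      intro y
      rw [(hβ'0 y).1, (hβ0 y).1]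
    · apply BoundedContinuousFunction.ext
      intro y
      rw [(hβ'0 y).2, (hβ0 y).2]
  obtain ⟨C₁, hC₁⟩ := isCompact_Icc.exists_bound_of_continuousOn hβcont
  obtain ⟨C₂, hC₂⟩ := isCompact_Icc.exists_bound_of_continuousOn hβ'cont
  set R := max (max C₁ C₂) 0 with hRdef
  have hR : (0:ℝ) ≤ R := le_max_right _ _
  obtain ⟨K, hK⟩ := F2_lipschitz m μ β₀ DS DI h hpInt (R := R) hR
  have huniq : EqOn β' β (Icc 0 T) := by
    apply ODE_solution_unique_of_mem_Icc_right
      (v := fun _ u => F2 m μ β₀ DS DI h hpInt u)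
      (s := fun _ => Metric.closedBall (0 : A × A) R)
      (fun _ _ => hK) hβ'cont
      (fun τ hτ => hβ'deriv τ hτ)
      (fun τ hτ => mem_closedBall_zero_iff.2
        ((hC₂ τ (Ico_subset_Icc_self hτ)).trans
          ((le_max_right C₁ C₂).trans (le_max_left _ _))))
      hβcont (fun τ hτ => hβderiv τ hτ)
      (fun τ hτ => mem_closedBall_zero_iff.2
        ((hC₁ τ (Ico_subset_Icc_self hτ)).trans
          ((le_max_left C₁ C₂).trans (le_max_left _ _)))) h00
  have hββ' : β' t = β t := huniq ht
  constructor
  · have e1 : (β' t).1 x = S' (cl xmax x) t := (hβ'eval t ht x).1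
    have e2 : (β t).1 x = S (cl xmax x) t := (hβeval t ht x).1
    rw [cl_eq hx] at e1 e2
    rw [← e1, ← e2, hββ']
  · have e1 : (β' t).2 x = I' (cl xmax x) t := (hβ'eval t ht x).2
    have e2 : (β t).2 x = I (cl xmax x) t := (hβeval t ht x).2
    rw [cl_eq hx] at e1 e2
    rw [← e1, ← e2, hββ']
end

section
/- Assume β₀ x_max n₀ / m < μ. Let (f, g) be the solution of the system (L) linearized at the disease-free equilibrium (S*(x) = n₀x/m, I*(x) = 0): ∂f/∂t = (μ − β₀n₀x/m)g − D_S(f − (x/m)⟨f(·,t)⟩), ∂g/∂t = (−μ + β₀n₀x/m)g − D_I(g − (x/m)⟨g(·,t)⟩) on J × ℝ₊, with C¹ initial data (f₀, g₀) satisfying ⟨|f₀|⟩ < ∞, ⟨|g₀|⟩ < ∞ and ⟨f₀⟩ + ⟨g₀⟩ = 0. Then ∫₀^{x_max} |g(x,t)| p(x) dx < ∞ for all t > 0, and for every x ∈ J, g(x,t) → 0 and f(x,t) → 0 as t → ∞; that is, the disease-free equilibrium is linearly stable. -/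
open Real Set Filter MeasureTheory intervalIntegral Topology

set_option maxHeartbeats 4000000

lemma ode_sol {a : ℝ} {u R : ℝ → ℝ} (hR : Continuous R)
    (hu : ∀ t ∈ Ici (0:ℝ), HasDerivAt u (a * u t + R t) t) :
    ∀ t ∈ Ici (0:ℝ), u t = Real.exp (a * t) * u 0
      + ∫ s in (0:ℝ)..t, Real.exp (a * (t - s)) * R s := by
  set I : ℝ → ℝ := fun t => ∫ s in (0:ℝ)..t, Real.exp (-a * s) * R s with hI
  have hRc : Continuous fun s => Real.exp (-a * s) * R s :=
    ((continuous_const.mul continuous_id).rexp).mul hR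
  have hIderiv : ∀ t : ℝ, HasDerivAt I (Real.exp (-a * t) * R t) t := fun t =>
    integral_hasDerivAt_right (hRc.intervalIntegrable 0 t)
      (hRc.stronglyMeasurableAtFilter _ _) hRc.continuousAt
  set v : ℝ → ℝ := fun t => Real.exp (-a * t) * u t - I t with hv
  have hvderiv : ∀ t ∈ Ici (0:ℝ), HasDerivAt v 0 t := by
    intro t ht
    have he : HasDerivAt (fun t => Real.exp (-a * t)) (Real.exp (-a * t) * -a) t :=
      ((hasDerivAt_id t).const_mul (-a)).exp.congr_deriv (by simp [mul_comm])
    have : HasDerivAt v (Real.exp (-a * t) * -a * u t + Real.exp (-a * t) * (a * u t + R t)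
        - Real.exp (-a * t) * R t) t := (he.mul (hu t ht)).sub (hIderiv t)
    convert this using 1
    ring
  have hvconst : ∀ t ∈ Ici (0:ℝ), v t = v 0 := by
    intro t ht
    have := constant_of_has_deriv_right_zero (a := 0) (b := t) (f := v)
      (fun s hs => ((hvderiv s hs.1).continuousAt).continuousWithinAt)
      (fun s hs => ((hvderiv s hs.1).hasDerivWithinAt))
    exact this t ⟨ht, le_rfl⟩
  intro t ht
  have h0 : v 0 = u 0 := by
    simp [hv, hI]
  have h := hvconst t ht
  rw [h0] at h
  have : u t = Real.exp (a * t) * (u 0 + I t) := by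
    have : Real.exp (-a * t) * u t = u 0 + I t := by
      have := h; simp only [hv] at this; linarith
    have h2 := congrArg (fun z => Real.exp (a * t) * z) this
    rw [← mul_assoc, ← Real.exp_add] at h2
    simpa using h2
  rw [this, mul_add]
  congr 1
  rw [hI, ← intervalIntegral.integral_const_mul]
  apply intervalIntegral.integral_congr
  intro s hs
  show Real.exp (a * t) * (Real.exp (-a * s) * R s) = Real.exp (a * (t - s)) * R s
  rw [← mul_assoc, ← Real.exp_add]
  ring_nf

lemma decay2 {c : ℝ} (hc : 0 < c) :
    Tendsto (fun t : ℝ => (1+t)^2 * Real.exp (-(c*t))) atTop (nhds 0) := by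
  have base : ∀ k : ℕ, Tendsto (fun t : ℝ => t^k * Real.exp (-(c*t))) atTop (nhds 0) := by
    intro k
    have h1 := Real.tendsto_pow_mul_exp_neg_atTop_nhds_zero k
    have h2 : Tendsto (fun t : ℝ => c * t) atTop atTop :=
      Filter.tendsto_id.const_mul_atTop hc
    have h3 := (h1.comp h2).const_mul ((c^k)⁻¹ : ℝ)
    rw [mul_zero] at h3
    refine h3.congr fun t => ?_
    simp only [Function.comp_apply, mul_pow]
    field_simp
  have h := ((base 0).add ((base 1).const_mul 2)).add (base 2)
  norm_num at h
  refine h.congr fun t => ?_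
  ring

/-- Theorem 3 (`deh2`): if `β₀ x_max n₀ / m < μ`, the disease-free equilibrium
`(S*(x) = n₀ x/m, I* = 0)` is linearly stable: for any solution `(f,g)` of the
linearized system `(L)` with initial data of zero total mean, `⟨|g(·,t)|⟩ < ∞` for
all `t > 0` and `f(x,t), g(x,t) → 0` as `t → ∞` for every `x ∈ J`. -/
theorem linear_stability_DFE
    (xmax m μ β₀ DS DI n₀ : ℝ) (p : ℝ → ℝ)
    (hxmax : 0 < xmax) (hm : 0 < m) (hμ : 0 < μ) (hβ₀ : 0 < β₀)
    (hDS : 0 < DS) (hDI : 0 < DI) (hn₀ : 0 < n₀)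
    (hp_nonneg : ∀ x ∈ Icc (0:ℝ) xmax, 0 ≤ p x) (hp0 : p 0 = 0)
    (hp_int : ∫ x in (0:ℝ)..xmax, p x = 1)
    (hm_def : m = ∫ x in (0:ℝ)..xmax, x * p x)
    (hthreshold : β₀ * xmax * n₀ / m < μ)
    (f g : ℝ → ℝ → ℝ)
    (hf_smooth : ContDiffOn ℝ 1 (Function.uncurry f) (Icc 0 xmax ×ˢ Ici 0))
    (hg_smooth : ContDiffOn ℝ 1 (Function.uncurry g) (Icc 0 xmax ×ˢ Ici 0))
    (hf0_int : IntervalIntegrable (fun x => |f x 0| * p x) MeasureTheory.volume 0 xmax)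
    (hg0_int : IntervalIntegrable (fun x => |g x 0| * p x) MeasureTheory.volume 0 xmax)
    (hzero_mean : (∫ x in (0:ℝ)..xmax, f x 0 * p x) +
      (∫ x in (0:ℝ)..xmax, g x 0 * p x) = 0)
    (hfeq : ∀ x ∈ Icc (0:ℝ) xmax, ∀ t ∈ Ici (0:ℝ),
      HasDerivAt (f x)
        ((μ - β₀ * n₀ * x / m) * g x t -
          DS * (f x t - x / m * ∫ y in (0:ℝ)..xmax, f y t * p y)) t)
    (hgeq : ∀ x ∈ Icc (0:ℝ) xmax, ∀ t ∈ Ici (0:ℝ),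
      HasDerivAt (g x)
        ((-μ + β₀ * n₀ * x / m) * g x t -
          DI * (g x t - x / m * ∫ y in (0:ℝ)..xmax, g y t * p y)) t) :
    (∀ t > (0:ℝ),
      IntervalIntegrable (fun x => |g x t| * p x) MeasureTheory.volume 0 xmax) ∧
    ∀ x ∈ Icc (0:ℝ) xmax,
      Tendsto (fun t => g x t) atTop (nhds 0) ∧
      Tendsto (fun t => f x t) atTop (nhds 0) := by
  have hx0 : (0:ℝ) ≤ xmax := hxmax.le
  have hIoc : MeasurableSet (Ioc (0:ℝ) xmax) := measurableSet_Ioc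
  -- ## basic integrability of p
  have hpInt : IntegrableOn p (Ioc 0 xmax) := by
    rw [← intervalIntegrable_iff_integrableOn_Ioc_of_le hx0]
    by_contra h
    rw [intervalIntegral.integral_undef h] at hp_int
    norm_num at hp_int
  have hpI : (∫ x in Ioc (0:ℝ) xmax, p x) = 1 := by
    rw [← intervalIntegral.integral_of_le hx0]; exact hp_int
  have hmI : (∫ x in Ioc (0:ℝ) xmax, x * p x) = m := by
    rw [← intervalIntegral.integral_of_le hx0]; exact hm_def.symm
  have key_int : ∀ q : ℝ → ℝ, ContinuousOn q (Icc 0 xmax) →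
      IntegrableOn (fun x => q x * p x) (Ioc 0 xmax) := by
    intro q hq
    obtain ⟨C, hC⟩ := isCompact_Icc.exists_bound_of_continuousOn hq
    refine Integrable.mono' (hpInt.const_mul C) ?_ ?_
    · exact ((hq.mono Ioc_subset_Icc_self).aestronglyMeasurable hIoc).mul
        hpInt.aestronglyMeasurable
    · refine (ae_restrict_iff' hIoc).2 (ae_of_all _ fun x hx => ?_)
      have hp := hp_nonneg x (Ioc_subset_Icc_self hx)
      have hqx := hC x (Ioc_subset_Icc_self hx)
      rw [norm_mul, Real.norm_of_nonneg hp]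
      exact mul_le_mul_of_nonneg_right hqx hp
  -- ## continuity facts
  have hgcx : ∀ t ∈ Ici (0:ℝ), ContinuousOn (fun x => g x t) (Icc 0 xmax) := fun t ht =>
    hg_smooth.continuousOn.comp (continuous_id.prodMk continuous_const).continuousOn
      (fun x hx => ⟨hx, ht⟩)
  have hfcx : ∀ t ∈ Ici (0:ℝ), ContinuousOn (fun x => f x t) (Icc 0 xmax) := fun t ht =>
    hf_smooth.continuousOn.comp (continuous_id.prodMk continuous_const).continuousOn
      (fun x hx => ⟨hx, ht⟩)
  have hgct : ∀ x ∈ Icc (0:ℝ) xmax, ContinuousOn (g x) (Ici 0) := fun x hx =>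
    hg_smooth.continuousOn.comp (continuous_const.prodMk continuous_id).continuousOn
      (fun t ht => ⟨hx, ht⟩)
  have hfct : ∀ x ∈ Icc (0:ℝ) xmax, ContinuousOn (f x) (Ici 0) := fun x hx =>
    hf_smooth.continuousOn.comp (continuous_const.prodMk continuous_id).continuousOn
      (fun t ht => ⟨hx, ht⟩)
  have bdT : ∀ h : ℝ → ℝ → ℝ, ContinuousOn (Function.uncurry h) (Icc 0 xmax ×ˢ Ici 0) →
      ∀ T : ℝ, ∃ C, 0 ≤ C ∧ ∀ x ∈ Icc (0:ℝ) xmax, ∀ t ∈ Icc (0:ℝ) T, |h x t| ≤ C := by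
    intro h hc T
    obtain ⟨C, hC⟩ := (isCompact_Icc.prod isCompact_Icc).exists_bound_of_continuousOn
      (hc.mono (by intro z hz; exact ⟨hz.1, hz.2.1⟩ :
        (Icc (0:ℝ) xmax ×ˢ Icc (0:ℝ) T : Set (ℝ × ℝ)) ⊆ Icc 0 xmax ×ˢ Ici 0))
    refine ⟨max C 0, le_max_right _ _, fun x hx t ht => ?_⟩
    exact le_trans (hC (x, t) ⟨hx, ht⟩) (le_max_left _ _)
  have hgbdT := bdT g hg_smooth.continuousOn
  have hfbdT := bdT f hf_smooth.continuousOn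
  -- ## the mean functions, extended to all of ℝ
  set Gm : ℝ → ℝ := fun t => ∫ x in Ioc (0:ℝ) xmax, g x (max t 0) * p x with hGm
  set Fm : ℝ → ℝ := fun t => ∫ x in Ioc (0:ℝ) xmax, f x (max t 0) * p x with hFm
  have mean_cont : ∀ h : ℝ → ℝ → ℝ,
      (∀ t ∈ Ici (0:ℝ), ContinuousOn (fun x => h x t) (Icc 0 xmax)) →
      (∀ x ∈ Icc (0:ℝ) xmax, ContinuousOn (h x) (Ici 0)) →
      (∀ T : ℝ, ∃ C, 0 ≤ C ∧ ∀ x ∈ Icc (0:ℝ) xmax, ∀ t ∈ Icc (0:ℝ) T, |h x t| ≤ C) →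
      Continuous (fun t => ∫ x in Ioc (0:ℝ) xmax, h x (max t 0) * p x) := by
    intro h hhcx hhct hhbdT
    have hcont : ContinuousOn (fun t => ∫ x in Ioc (0:ℝ) xmax, h x t * p x) (Ici 0) := by
      intro t₀ ht₀
      obtain ⟨C, hC0, hC⟩ := hhbdT (t₀ + 1)
      apply continuousWithinAt_of_dominated (bound := fun x => C * p x)
      · filter_upwards [self_mem_nhdsWithin] with t ht
        exact (((hhcx t ht).mono Ioc_subset_Icc_self).aestronglyMeasurable hIoc).mul
          hpInt.aestronglyMeasurable
      · have hev : ∀ᶠ t in 𝓝[Ici 0] t₀, t ∈ Ici (0:ℝ) ∩ Iio (t₀ + 1) :=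
          Filter.inter_mem self_mem_nhdsWithin
            (nhdsWithin_le_nhds (Iio_mem_nhds (lt_add_one t₀)))
        filter_upwards [hev] with t ht
        refine (ae_restrict_iff' hIoc).2 (ae_of_all _ fun x hx => ?_)
        have hp := hp_nonneg x (Ioc_subset_Icc_self hx)
        rw [norm_mul, Real.norm_of_nonneg hp, Real.norm_eq_abs]
        exact mul_le_mul_of_nonneg_right
          (hC x (Ioc_subset_Icc_self hx) t ⟨ht.1, ht.2.le⟩) hp
      · exact hpInt.const_mul C
      · refine (ae_restrict_iff' hIoc).2 (ae_of_all _ fun x hx => ?_)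
        exact (((hhct x (Ioc_subset_Icc_self hx)) t₀ ht₀).mono_of_mem_nhdsWithin
          self_mem_nhdsWithin).mul continuousWithinAt_const
    exact hcont.comp_continuous (continuous_id.max continuous_const) (fun t => le_max_right t 0)
  have hGmc : Continuous Gm := mean_cont g hgcx hgct hgbdT
  have hFmc : Continuous Fm := mean_cont f hfcx hfct hfbdT
  have hGm_eq : ∀ t, t ∈ Ici (0:ℝ) → (∫ y in (0:ℝ)..xmax, g y t * p y) = Gm t := by
    intro t ht
    rw [intervalIntegral.integral_of_le hx0, hGm]
    simp only [max_eq_left (show (0:ℝ) ≤ t from ht)]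
  have hFm_eq : ∀ t, t ∈ Ici (0:ℝ) → (∫ y in (0:ℝ)..xmax, f y t * p y) = Fm t := by
    intro t ht
    rw [intervalIntegral.integral_of_le hx0, hFm]
    simp only [max_eq_left (show (0:ℝ) ≤ t from ht)]
  -- ## threshold constants
  set lam : ℝ := μ - β₀ * xmax * n₀ / m with hlam
  have hlam0 : 0 < lam := by simp only [hlam]; linarith
  set κ : ℝ := lam + DI with hκ
  have hκ0 : 0 < κ := by positivity
  set axf : ℝ → ℝ := fun x => -μ + β₀ * n₀ * x / m - DI with haxf
  have haxle : ∀ x ∈ Icc (0:ℝ) xmax, axf x ≤ -κ := by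
    intro x hx
    have h1 : β₀ * n₀ * x ≤ β₀ * xmax * n₀ := by
      nlinarith [mul_le_mul_of_nonneg_left hx.2 (mul_nonneg hβ₀.le hn₀.le)]
    have h2 : β₀ * n₀ * x / m ≤ β₀ * xmax * n₀ / m := (div_le_div_iff_of_pos_right hm).mpr h1
    simp only [haxf, hκ, hlam]
    linarith
  -- ## initial data integral
  set A : ℝ := ∫ x in Ioc (0:ℝ) xmax, |g x 0| * p x with hA
  have hg0set : IntegrableOn (fun x => |g x 0| * p x) (Ioc 0 xmax) := by
    rw [← intervalIntegrable_iff_integrableOn_Ioc_of_le hx0]; exact hg0_int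
  have hA0 : 0 ≤ A := setIntegral_nonneg hIoc fun x hx =>
    mul_nonneg (abs_nonneg _) (hp_nonneg x (Ioc_subset_Icc_self hx))
  -- ## representation formula for g
  have gRep : ∀ x ∈ Icc (0:ℝ) xmax, ∀ t ∈ Ici (0:ℝ),
      g x t = Real.exp (axf x * t) * g x 0
        + ∫ s in (0:ℝ)..t, Real.exp (axf x * (t - s)) * (DI * (x / m) * Gm s) := by
    intro x hx
    apply ode_sol (continuous_const.mul hGmc)
    intro t ht
    have h0 := hgeq x hx t ht
    rw [hGm_eq t ht] at h0
    exact h0.congr_deriv (by simp only [haxf, Pi.mul_apply]; ring)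
  -- ## pointwise a-priori bound
  set Q : ℝ → ℝ := fun t => ∫ s in (0:ℝ)..t, Real.exp (-κ * (t - s)) * |Gm s| with hQ
  have hgpt : ∀ x ∈ Icc (0:ℝ) xmax, ∀ t ∈ Ici (0:ℝ),
      |g x t| ≤ Real.exp (-κ * t) * |g x 0| + DI * (x / m) * Q t := by
    intro x hx t ht
    have hxm : 0 ≤ x / m := div_nonneg hx.1 hm.le
    have hDIxm : 0 ≤ DI * (x / m) := mul_nonneg hDI.le hxm
    rw [gRep x hx t ht]
    refine (abs_add_le _ _).trans ?_
    have e1 : |Real.exp (axf x * t) * g x 0| ≤ Real.exp (-κ * t) * |g x 0| := by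
      rw [abs_mul, abs_of_nonneg (Real.exp_pos _).le]
      exact mul_le_mul_of_nonneg_right
        (Real.exp_le_exp.2 (mul_le_mul_of_nonneg_right (haxle x hx) ht)) (abs_nonneg _)
    have e2 : |∫ s in (0:ℝ)..t, Real.exp (axf x * (t - s)) * (DI * (x / m) * Gm s)|
        ≤ DI * (x / m) * Q t := by
      refine (intervalIntegral.abs_integral_le_integral_abs ht).trans ?_
      have hcont1 : Continuous fun s => |Real.exp (axf x * (t - s)) * (DI * (x / m) * Gm s)| :=
        (((continuous_const.mul (continuous_const.sub continuous_id)).rexp).mul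
          (continuous_const.mul hGmc)).abs
      have hcont2 : Continuous fun s => DI * (x / m) * (Real.exp (-κ * (t - s)) * |Gm s|) :=
        continuous_const.mul
          (((continuous_const.mul (continuous_const.sub continuous_id)).rexp).mul hGmc.abs)
      have hmono : (∫ s in (0:ℝ)..t, |Real.exp (axf x * (t - s)) * (DI * (x / m) * Gm s)|)
          ≤ ∫ s in (0:ℝ)..t, DI * (x / m) * (Real.exp (-κ * (t - s)) * |Gm s|) := by
        refine intervalIntegral.integral_mono_on ht (hcont1.intervalIntegrable _ _)
          (hcont2.intervalIntegrable _ _) fun s hs => ?_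
        rw [abs_mul, abs_of_nonneg (Real.exp_pos _).le, abs_mul, abs_mul,
          abs_of_nonneg hDI.le, abs_of_nonneg hxm]
        have he : Real.exp (axf x * (t - s)) ≤ Real.exp (-κ * (t - s)) :=
          Real.exp_le_exp.2 (mul_le_mul_of_nonneg_right (haxle x hx) (by linarith [hs.2]))
        nlinarith [abs_nonneg (Gm s), Real.exp_pos (axf x * (t - s)),
          mul_nonneg hDIxm (abs_nonneg (Gm s))]
      refine hmono.trans ?_
      rw [intervalIntegral.integral_const_mul]
    linarith
  -- ## mean bound
  have hGle : ∀ t ∈ Ici (0:ℝ), |Gm t| ≤ Real.exp (-κ * t) * A + DI * Q t := by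
    intro t ht
    have habs : |Gm t| ≤ ∫ x in Ioc (0:ℝ) xmax, |g x t| * p x := by
      have h0 : ‖∫ x in Ioc (0:ℝ) xmax, g x (max t 0) * p x‖ ≤
          ∫ x in Ioc (0:ℝ) xmax, ‖g x (max t 0) * p x‖ :=
        MeasureTheory.norm_integral_le_integral_norm _
      rw [Real.norm_eq_abs] at h0
      refine h0.trans_eq (setIntegral_congr_fun hIoc fun x hx => ?_)
      rw [Real.norm_eq_abs, max_eq_left ht, abs_mul,
        abs_of_nonneg (hp_nonneg x (Ioc_subset_Icc_self hx))]
    refine habs.trans ?_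
    have hint1 : IntegrableOn (fun x => |g x 0| * p x) (Ioc 0 xmax) := hg0set
    have hint2 : IntegrableOn (fun x => x * p x) (Ioc 0 xmax) :=
      key_int _ continuousOn_id
    have hmono : (∫ x in Ioc (0:ℝ) xmax, |g x t| * p x) ≤
        ∫ x in Ioc (0:ℝ) xmax,
          (Real.exp (-κ * t) * (|g x 0| * p x) + (DI * Q t / m) * (x * p x)) := by
      refine setIntegral_mono_on (key_int _ (hgcx t ht).abs)
        ((hint1.const_mul _).add (hint2.const_mul _)) hIoc fun x hx => ?_
      have hg' := hgpt x (Ioc_subset_Icc_self hx) t ht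
      have hp := hp_nonneg x (Ioc_subset_Icc_self hx)
      have := mul_le_mul_of_nonneg_right hg' hp
      refine this.trans (le_of_eq ?_)
      field_simp
    refine hmono.trans ?_
    rw [integral_add (hint1.const_mul _) (hint2.const_mul _),
      MeasureTheory.integral_const_mul, MeasureTheory.integral_const_mul, hmI, ← hA]
    have : DI * Q t / m * m = DI * Q t := by field_simp
    rw [this]
  -- ## Gronwall
  set H : ℝ → ℝ := fun t => Real.exp (κ * t) * |Gm t| with hH
  have hHcont : Continuous H := ((continuous_const.mul continuous_id).rexp).mul hGmc.abs
  set W : ℝ → ℝ := fun t => ∫ s in (0:ℝ)..t, H s with hW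
  have hWd : ∀ t : ℝ, HasDerivAt W (H t) t := fun t =>
    integral_hasDerivAt_right (hHcont.intervalIntegrable 0 t)
      (hHcont.stronglyMeasurableAtFilter _ _) hHcont.continuousAt
  have hHW : ∀ t ∈ Ici (0:ℝ), H t ≤ A + DI * W t := by
    intro t ht
    have h1 : H t ≤ Real.exp (κ * t) * (Real.exp (-κ * t) * A + DI * Q t) := by
      exact mul_le_mul_of_nonneg_left (hGle t ht) (Real.exp_pos _).le
    have h2 : Real.exp (κ * t) * Real.exp (-κ * t) = 1 := by
      rw [← Real.exp_add]; simp
    have h3 : Real.exp (κ * t) * Q t = W t := by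
      rw [hQ, hW, ← intervalIntegral.integral_const_mul]
      apply intervalIntegral.integral_congr
      intro s hs
      show Real.exp (κ * t) * (Real.exp (-κ * (t - s)) * |Gm s|) = Real.exp (κ * s) * |Gm s|
      rw [← mul_assoc, ← Real.exp_add]
      ring_nf
    nlinarith [Real.exp_pos (κ * t)]
  set φ : ℝ → ℝ := fun t => Real.exp (-(DI * t)) * (DI * W t + A) with hφ
  have hφd : ∀ t : ℝ, HasDerivAt φ
      (Real.exp (-(DI * t)) * (DI * (H t - (DI * W t + A)))) t := by
    intro t
    have h1 : HasDerivAt (fun t : ℝ => Real.exp (-(DI * t)))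
        (Real.exp (-(DI * t)) * -DI) t := by
      have := (((hasDerivAt_id t).const_mul DI).neg).exp
      exact this.congr_deriv (by simp [mul_comm])
    have h2 : HasDerivAt (fun t => DI * W t + A) (DI * H t) t :=
      ((hWd t).const_mul DI).add_const A
    exact (h1.mul h2).congr_deriv (by ring)
  have hWc : Continuous W := continuous_iff_continuousAt.2 fun t => (hWd t).continuousAt
  have hφc : Continuous φ :=
    ((continuous_const.mul continuous_id).neg.rexp).mul ((continuous_const.mul hWc).add continuous_const)
  have hφanti : AntitoneOn φ (Ici 0) := by
    apply antitoneOn_of_deriv_nonpos (convex_Ici 0) hφc.continuousOn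
    · intro t ht
      exact (hφd t).differentiableAt.differentiableWithinAt
    · intro t ht
      rw [interior_Ici] at ht
      rw [(hφd t).deriv]
      have h1 := hHW t (show (0:ℝ) ≤ t from le_of_lt ht)
      have h2 : H t - (DI * W t + A) ≤ 0 := by linarith
      exact mul_nonpos_of_nonneg_of_nonpos (Real.exp_pos _).le
        (mul_nonpos_of_nonneg_of_nonpos hDI.le h2)
  have hGbd : ∀ t ∈ Ici (0:ℝ), |Gm t| ≤ A * Real.exp (-lam * t) := by
    intro t ht
    have hφle : φ t ≤ φ 0 := hφanti self_mem_Ici ht ht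
    have hφ0 : φ 0 = A := by
      simp [hφ, hW, intervalIntegral.integral_same]
    rw [hφ0] at hφle
    -- DI * W t + A ≤ A * exp (DI * t)
    have h1 : DI * W t + A ≤ A * Real.exp (DI * t) := by
      have h := mul_le_mul_of_nonneg_left hφle (Real.exp_pos (DI * t)).le
      simp only [hφ] at h
      rw [show Real.exp (DI * t) * (Real.exp (-(DI * t)) * (DI * W t + A)) =
        Real.exp (DI * t + -(DI * t)) * (DI * W t + A) from by rw [Real.exp_add]; ring] at h
      simp only [add_neg_cancel, Real.exp_zero, one_mul] at h
      linarith [h, mul_comm A (Real.exp (DI * t))]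
    have h2 : H t ≤ A * Real.exp (DI * t) := by have := hHW t ht; linarith
    -- convert back
    have h3 : |Gm t| = Real.exp (-(κ * t)) * H t := by
      rw [hH, ← mul_assoc, ← Real.exp_add]
      simp
    rw [h3]
    calc Real.exp (-(κ * t)) * H t ≤ Real.exp (-(κ * t)) * (A * Real.exp (DI * t)) :=
          mul_le_mul_of_nonneg_left h2 (Real.exp_pos _).le
      _ = A * (Real.exp (-(κ * t)) * Real.exp (DI * t)) := by ring
      _ = A * Real.exp (-lam * t) := by
          rw [← Real.exp_add]
          congr 1
          simp only [hκ]
          ring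
  -- ## pointwise decay of g
  have hgbd : ∀ x ∈ Icc (0:ℝ) xmax, ∀ t ∈ Ici (0:ℝ),
      |g x t| ≤ (|g x 0| + DI * (x / m) * A) * ((1 + t) * Real.exp (-lam * t)) := by
    intro x hx t ht
    have hxm : 0 ≤ x / m := div_nonneg hx.1 hm.le
    have hDIxm : 0 ≤ DI * (x / m) := mul_nonneg hDI.le hxm
    have h1 := hgpt x hx t ht
    have hQle : Q t ≤ t * (A * Real.exp (-lam * t)) := by
      have hcont1 : Continuous fun s => Real.exp (-κ * (t - s)) * |Gm s| :=
        ((continuous_const.mul (continuous_const.sub continuous_id)).rexp).mul hGmc.abs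
      have h2 : Q t ≤ ∫ s in (0:ℝ)..t, A * Real.exp (-lam * t) := by
        refine intervalIntegral.integral_mono_on ht (hcont1.intervalIntegrable _ _)
          intervalIntegrable_const fun s hs => ?_
        have hkey : Real.exp (-κ * (t - s)) * Real.exp (-lam * s) ≤ Real.exp (-lam * t) := by
          rw [← Real.exp_add]
          refine Real.exp_le_exp.2 ?_
          simp only [hκ]
          nlinarith [mul_nonneg hDI.le (sub_nonneg.2 hs.2)]
        calc Real.exp (-κ * (t - s)) * |Gm s|
            ≤ Real.exp (-κ * (t - s)) * (A * Real.exp (-lam * s)) :=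
              mul_le_mul_of_nonneg_left (hGbd s hs.1) (Real.exp_pos _).le
          _ = A * (Real.exp (-κ * (t - s)) * Real.exp (-lam * s)) := by ring
          _ ≤ A * Real.exp (-lam * t) := mul_le_mul_of_nonneg_left hkey hA0
      refine h2.trans ?_
      rw [intervalIntegral.integral_const]
      simp
    have ht'' : (0:ℝ) ≤ t := ht
    have he : Real.exp (-κ * t) ≤ Real.exp (-lam * t) := by
      refine Real.exp_le_exp.2 ?_
      simp only [hκ]
      nlinarith [mul_nonneg hDI.le ht'']
    have h4 := mul_le_mul_of_nonneg_left hQle hDIxm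
    have h5 := mul_le_mul_of_nonneg_right he (abs_nonneg (g x 0))
    have ht' : (0:ℝ) ≤ t := ht
    nlinarith [mul_nonneg (mul_nonneg hDIxm hA0) (mul_nonneg ht' (Real.exp_pos (-lam * t)).le),
      mul_nonneg (abs_nonneg (g x 0)) (mul_nonneg ht' (Real.exp_pos (-lam * t)).le),
      mul_nonneg hDIxm hA0, Real.exp_pos (-lam * t)]
  -- ## differentiation under the integral sign
  have mean_deriv : ∀ (h : ℝ → ℝ → ℝ) (c : ℝ) (w : ℝ → ℝ), 0 < c → Continuous w →
      (∀ t ∈ Ici (0:ℝ), ContinuousOn (fun x => h x t) (Icc 0 xmax)) →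
      (∀ T : ℝ, ∃ C, 0 ≤ C ∧ ∀ x ∈ Icc (0:ℝ) xmax, ∀ t ∈ Icc (0:ℝ) T, |h x t| ≤ C) →
      (∀ x ∈ Icc (0:ℝ) xmax, ∀ t ∈ Ici (0:ℝ), HasDerivAt (h x)
        (w x * g x t - c * (h x t - x / m * ∫ y in (0:ℝ)..xmax, h y t * p y)) t) →
      ∀ t₀ > (0:ℝ), HasDerivAt (fun t => ∫ x in Ioc (0:ℝ) xmax, h x (max t 0) * p x)
        (∫ x in Ioc (0:ℝ) xmax, w x * g x t₀ * p x) t₀ := by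
    intro h c w hc hw hhcx hhbdT heq t₀ ht₀
    obtain ⟨Cg, hCg0, hCg⟩ := hgbdT (t₀ + 1)
    obtain ⟨Ch, hCh0, hCh⟩ := hhbdT (t₀ + 1)
    obtain ⟨Cw, hCw⟩ := isCompact_Icc.exists_bound_of_continuousOn
      (hw.continuousOn (s := Icc (0:ℝ) xmax))
    set ε : ℝ := min (t₀/2) 1 with hε
    have hεpos : 0 < ε := lt_min (by linarith) one_pos
    have hball : ∀ t ∈ Metric.ball t₀ ε, 0 < t ∧ t ≤ t₀ + 1 := by
      intro t ht
      rw [Metric.mem_ball, Real.dist_eq, abs_lt] at ht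
      constructor
      · nlinarith [min_le_left (t₀/2) (1:ℝ), ht.1]
      · nlinarith [min_le_right (t₀/2) (1:ℝ), ht.2]
    have hmean_bd : ∀ t, 0 ≤ t → t ≤ t₀ + 1 → |∫ y in (0:ℝ)..xmax, h y t * p y| ≤ Ch := by
      intro t ht0 ht1
      rw [intervalIntegral.integral_of_le hx0]
      have habs : |∫ y in Ioc (0:ℝ) xmax, h y t * p y| ≤
          ∫ y in Ioc (0:ℝ) xmax, |h y t| * p y := by
        have h0 : ‖∫ y in Ioc (0:ℝ) xmax, h y t * p y‖ ≤
            ∫ y in Ioc (0:ℝ) xmax, ‖h y t * p y‖ :=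
          MeasureTheory.norm_integral_le_integral_norm _
        rw [Real.norm_eq_abs] at h0
        refine h0.trans_eq (setIntegral_congr_fun hIoc fun y hy => ?_)
        rw [Real.norm_eq_abs, abs_mul, abs_of_nonneg (hp_nonneg y (Ioc_subset_Icc_self hy))]
      refine habs.trans ?_
      have h2 : (∫ y in Ioc (0:ℝ) xmax, |h y t| * p y) ≤ ∫ y in Ioc (0:ℝ) xmax, Ch * p y :=
        setIntegral_mono_on (key_int _ (hhcx t ht0).abs) (hpInt.const_mul Ch) hIoc
          fun y hy => mul_le_mul_of_nonneg_right (hCh y (Ioc_subset_Icc_self hy) t ⟨ht0, ht1⟩)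
            (hp_nonneg y (Ioc_subset_Icc_self hy))
      refine h2.trans ?_
      rw [MeasureTheory.integral_const_mul, hpI, mul_one]
    set F' : ℝ → ℝ → ℝ := fun t x =>
      (w x * g x t - c * (h x t - x / m * ∫ y in (0:ℝ)..xmax, h y t * p y)) * p x with hF'
    set bd : ℝ → ℝ := fun x => (Cw * Cg + c * (Ch + xmax / m * Ch)) * p x with hbd
    have key := _root_.hasDerivAt_integral_of_dominated_loc_of_deriv_le (𝕜 := ℝ)
      (μ := volume.restrict (Ioc (0:ℝ) xmax))
      (F := fun t x => h x t * p x) (F' := F') (x₀ := t₀) (bound := bd) (Metric.ball_mem_nhds t₀ hεpos)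
      ?_ ?_ ?_ ?_ ?_ ?_
    · obtain ⟨-, hder⟩ := key
      have hev : (fun t => ∫ x in Ioc (0:ℝ) xmax, h x (max t 0) * p x)
          =ᶠ[𝓝 t₀] (fun t => ∫ x in Ioc (0:ℝ) xmax, h x t * p x) := by
        filter_upwards [Ioi_mem_nhds ht₀] with t ht
        simp [max_eq_left (le_of_lt (show (0:ℝ) < t from ht))]
      have hder2 := hder.congr_of_eventuallyEq hev
      refine hder2.congr_deriv (Eq.symm ?_)
      have hint1 : IntegrableOn (fun x => w x * g x t₀ * p x) (Ioc 0 xmax) :=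
        key_int _ ((hw.continuousOn).mul (hgcx t₀ (le_of_lt ht₀)))
      have hint2 : IntegrableOn (fun x => (c * h x t₀) * p x) (Ioc 0 xmax) :=
        key_int _ ((continuousOn_const).mul (hhcx t₀ (le_of_lt ht₀)))
      have hint3 : IntegrableOn (fun x =>
          ((c / m * ∫ y in (0:ℝ)..xmax, h y t₀ * p y) * x) * p x) (Ioc 0 xmax) :=
        key_int _ ((continuousOn_const).mul continuousOn_id)
      have hsplit : ∀ x : ℝ, F' t₀ x = w x * g x t₀ * p x - (c * h x t₀) * p x
          + ((c / m * ∫ y in (0:ℝ)..xmax, h y t₀ * p y) * x) * p x := by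
        intro x; simp only [hF']; ring
      have hint12 : IntegrableOn (fun x => w x * g x t₀ * p x - (c * h x t₀) * p x)
          (Ioc 0 xmax) := hint1.sub hint2
      have hs2 : (∫ x in Ioc (0:ℝ) xmax, F' t₀ x) = ∫ x in Ioc (0:ℝ) xmax,
          (w x * g x t₀ * p x - (c * h x t₀) * p x
            + ((c / m * ∫ y in (0:ℝ)..xmax, h y t₀ * p y) * x) * p x) :=
        setIntegral_congr_fun hIoc (fun x _ => hsplit x)
      rw [hs2, integral_add hint12 hint3, integral_sub hint1 hint2]
      have e2 : (∫ x in Ioc (0:ℝ) xmax, (c * h x t₀) * p x) =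
          c * ∫ x in Ioc (0:ℝ) xmax, h x t₀ * p x := by
        rw [← MeasureTheory.integral_const_mul]; exact setIntegral_congr_fun hIoc fun x _ => by ring
      have e3 : (∫ x in Ioc (0:ℝ) xmax,
          ((c / m * ∫ y in (0:ℝ)..xmax, h y t₀ * p y) * x) * p x) =
          (c / m * ∫ y in (0:ℝ)..xmax, h y t₀ * p y) * m := by
        rw [← hmI, ← MeasureTheory.integral_const_mul]
        exact setIntegral_congr_fun hIoc fun x _ => by ring
      rw [e2, e3, intervalIntegral.integral_of_le hx0]
      field_simp
      ring
    · filter_upwards [Ioi_mem_nhds ht₀] with t ht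
      exact (((hhcx t (le_of_lt (show (0:ℝ) < t from ht))).mono Ioc_subset_Icc_self).aestronglyMeasurable hIoc).mul
        hpInt.aestronglyMeasurable
    · exact key_int _ (hhcx t₀ (le_of_lt ht₀))
    · refine ContinuousOn.aestronglyMeasurable ?_ hIoc |>.mul hpInt.aestronglyMeasurable
      exact ((hw.continuousOn.mul ((hgcx t₀ (le_of_lt ht₀)).mono Ioc_subset_Icc_self)).sub
        (continuousOn_const.mul (((hhcx t₀ (le_of_lt ht₀)).mono Ioc_subset_Icc_self).sub
          ((continuousOn_id.div continuousOn_const (fun _ _ => hm.ne')).mul continuousOn_const))))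
    · refine (ae_restrict_iff' hIoc).2 (ae_of_all _ fun x hx => fun t ht => ?_)
      obtain ⟨ht0, ht1⟩ := hball t ht
      have hxI := Ioc_subset_Icc_self hx
      have hp := hp_nonneg x hxI
      have hxm : 0 ≤ x / m := div_nonneg (le_of_lt hx.1) hm.le
      have hxm' : x / m ≤ xmax / m := by gcongr; exact hx.2
      simp only [hF', hbd, norm_mul, Real.norm_eq_abs]
      rw [abs_of_nonneg hp]
      refine mul_le_mul_of_nonneg_right ?_ hp
      have h1 : |w x * g x t| ≤ Cw * Cg := by
        rw [abs_mul]
        refine mul_le_mul (hCw x hxI) (hCg x hxI t ⟨ht0.le, ht1⟩) (abs_nonneg _)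
          ((abs_nonneg _).trans (hCw x hxI))
      have h2 : |h x t - x / m * ∫ y in (0:ℝ)..xmax, h y t * p y| ≤ Ch + xmax / m * Ch := by
        refine (abs_sub _ _).trans ?_
        gcongr
        · exact hCh x hxI t ⟨ht0.le, ht1⟩
        · rw [abs_mul, abs_of_nonneg hxm]
          calc x / m * |∫ y in (0:ℝ)..xmax, h y t * p y| ≤ x / m * Ch :=
                mul_le_mul_of_nonneg_left (hmean_bd t ht0.le ht1) hxm
            _ ≤ xmax / m * Ch := mul_le_mul_of_nonneg_right hxm' hCh0
      calc |w x * g x t - c * (h x t - x / m * ∫ y in (0:ℝ)..xmax, h y t * p y)|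
          ≤ |w x * g x t| + c * |h x t - x / m * ∫ y in (0:ℝ)..xmax, h y t * p y| := by
            refine (abs_sub _ _).trans ?_
            rw [abs_mul c, abs_of_nonneg hc.le]
        _ ≤ Cw * Cg + c * (Ch + xmax / m * Ch) :=
            add_le_add h1 (mul_le_mul_of_nonneg_left h2 hc.le)
    · exact hpInt.const_mul _
    · refine (ae_restrict_iff' hIoc).2 (ae_of_all _ fun x hx => fun t ht => ?_)
      exact (heq x (Ioc_subset_Icc_self hx) t (le_of_lt (hball t ht).1)).mul_const (p x)
  have hFd := mean_deriv f DS (fun x => μ - β₀ * n₀ * x / m) hDS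
    (continuous_const.sub ((continuous_const.mul continuous_id).div_const m)) hfcx hfbdT hfeq
  have hGd := mean_deriv g DI (fun x => -μ + β₀ * n₀ * x / m) hDI
    (continuous_const.add ((continuous_const.mul continuous_id).div_const m)) hgcx hgbdT hgeq
  -- ## conservation of the total mean
  have hΦconst : ∀ t ∈ Ici (0:ℝ), Fm t + Gm t = 0 := by
    have hΦd : ∀ t > (0:ℝ), HasDerivAt (fun t => Fm t + Gm t) 0 t := by
      intro t ht
      have h12 := (hFd t ht).add (hGd t ht)
      have hint1 : IntegrableOn (fun x => (μ - β₀ * n₀ * x / m) * g x t * p x) (Ioc 0 xmax) :=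
        key_int _ (((continuous_const.sub ((continuous_const.mul continuous_id).div_const
          m)).continuousOn).mul (hgcx t (le_of_lt ht)))
      have hint2 : IntegrableOn (fun x => (-μ + β₀ * n₀ * x / m) * g x t * p x) (Ioc 0 xmax) :=
        key_int _ (((continuous_const.add ((continuous_const.mul continuous_id).div_const
          m)).continuousOn).mul (hgcx t (le_of_lt ht)))
      refine h12.congr_deriv ?_
      rw [← integral_add hint1 hint2]
      rw [setIntegral_congr_fun hIoc (g := fun _ => (0:ℝ))
        (fun x _ => by ring)]
      simp
    have hΦc : Continuous (fun t => Fm t + Gm t) := hFmc.add hGmc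
    have hdiff : DifferentiableOn ℝ (fun t => Fm t + Gm t) (interior (Ici (0:ℝ))) := by
      intro t ht
      rw [interior_Ici] at ht
      exact (hΦd t ht).differentiableAt.differentiableWithinAt
    have hmono : MonotoneOn (fun t => Fm t + Gm t) (Ici 0) := by
      apply monotoneOn_of_deriv_nonneg (convex_Ici 0) hΦc.continuousOn hdiff
      intro t ht
      rw [interior_Ici] at ht
      rw [(hΦd t ht).deriv]
    have hanti : AntitoneOn (fun t => Fm t + Gm t) (Ici 0) := by
      apply antitoneOn_of_deriv_nonpos (convex_Ici 0) hΦc.continuousOn hdiff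
      intro t ht
      rw [interior_Ici] at ht
      rw [(hΦd t ht).deriv]
    intro t ht
    have e0 : Fm 0 + Gm 0 = 0 := by
      have hmax : max (0:ℝ) 0 = 0 := max_self 0
      simp only [hFm, hGm, hmax]
      rw [← intervalIntegral.integral_of_le hx0, ← intervalIntegral.integral_of_le hx0]
      exact hzero_mean
    have h1 : Fm t + Gm t ≤ Fm 0 + Gm 0 := hanti self_mem_Ici ht ht
    have h2 : Fm 0 + Gm 0 ≤ Fm t + Gm t := hmono self_mem_Ici ht ht
    linarith
  have hFbd : ∀ t ∈ Ici (0:ℝ), |Fm t| ≤ A * Real.exp (-lam * t) := by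
    intro t ht
    have : Fm t = -Gm t := by have := hΦconst t ht; linarith
    rw [this, abs_neg]
    exact hGbd t ht
  -- ## representation formula for f
  have fRep : ∀ x ∈ Icc (0:ℝ) xmax, ∀ t ∈ Ici (0:ℝ),
      f x t = Real.exp (-DS * t) * f x 0
        + ∫ s in (0:ℝ)..t, Real.exp (-DS * (t - s)) *
            ((μ - β₀ * n₀ * x / m) * g x (max s 0) + DS * (x / m) * Fm s) := by
    intro x hx
    have hgEc : Continuous (fun s : ℝ => g x (max s 0)) :=
      (hgct x hx).comp_continuous (continuous_id.max continuous_const)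
        (fun t => le_max_right t 0)
    apply ode_sol ((continuous_const.mul hgEc).add (continuous_const.mul hFmc))
    intro t ht
    have h0 := hfeq x hx t ht
    rw [hFm_eq t ht] at h0
    exact h0.congr_deriv (by simp only [max_eq_left (show (0:ℝ) ≤ t from ht), Pi.add_apply, Pi.mul_apply]; ring)
  -- ## final assembly
  constructor
  · intro t ht
    rw [intervalIntegrable_iff_integrableOn_Ioc_of_le hx0]
    exact key_int _ (hgcx t ht.le).abs
  intro x hx
  have hxm : 0 ≤ x / m := div_nonneg hx.1 hm.le
  have hDIxm : 0 ≤ DI * (x / m) := mul_nonneg hDI.le hxm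
  set Cx : ℝ := |g x 0| + DI * (x / m) * A with hCx
  have hCx0 : 0 ≤ Cx := add_nonneg (abs_nonneg _) (mul_nonneg hDIxm hA0)
  constructor
  · -- g tends to 0
    apply squeeze_zero_norm' (a := fun t => Cx * ((1 + t)^2 * Real.exp (-(lam * t))))
    · filter_upwards [eventually_ge_atTop (0:ℝ)] with t ht
      rw [Real.norm_eq_abs]
      refine (hgbd x hx t ht).trans ?_
      have h1 : Real.exp (-lam * t) = Real.exp (-(lam * t)) := by ring_nf
      rw [h1]
      have h2 : (0:ℝ) ≤ Real.exp (-(lam * t)) := (Real.exp_pos _).le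
      rw [← hCx]
      nlinarith [mul_nonneg hCx0 h2, mul_nonneg (mul_nonneg hCx0 h2) ht,
        mul_nonneg (mul_nonneg (mul_nonneg hCx0 h2) ht) ht]
    · have := (decay2 hlam0).const_mul Cx
      simpa using this
  · -- f tends to 0
    set ν : ℝ := min DS lam with hν
    have hν0 : 0 < ν := lt_min hDS hlam0
    set Bx : ℝ := μ + β₀ * n₀ * xmax / m with hBx
    have hBx0 : 0 < Bx := by simp only [hBx]; positivity
    have hwb : |μ - β₀ * n₀ * x / m| ≤ Bx := by
      have h1 : 0 ≤ β₀ * n₀ * x / m :=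
        div_nonneg (mul_nonneg (mul_nonneg hβ₀.le hn₀.le) hx.1) hm.le
      have h2 : β₀ * n₀ * x / m ≤ β₀ * n₀ * xmax / m := by
        refine (div_le_div_iff_of_pos_right hm).mpr ?_
        nlinarith [mul_le_mul_of_nonneg_left hx.2 (mul_nonneg hβ₀.le hn₀.le)]
      rw [abs_le]
      constructor <;> simp only [hBx] <;> linarith [hμ.le]
    set Kx : ℝ := Bx * Cx + DS * (x / m) * A with hKx
    have hKx0 : 0 ≤ Kx := add_nonneg (mul_nonneg hBx0.le hCx0) (mul_nonneg (mul_nonneg hDS.le hxm) hA0)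
    have hfbd : ∀ t ∈ Ici (0:ℝ), |f x t| ≤
        (|f x 0| + Kx) * ((1 + t)^2 * Real.exp (-(ν * t))) := by
      intro t ht
      rw [fRep x hx t ht]
      refine (abs_add_le _ _).trans ?_
      have hRbd : ∀ s ∈ Icc (0:ℝ) t,
          |Real.exp (-DS * (t - s)) *
            ((μ - β₀ * n₀ * x / m) * g x (max s 0) + DS * (x / m) * Fm s)|
          ≤ Kx * (1 + t) * Real.exp (-(ν * t)) := by
        intro s hs
        have hs0 : (0:ℝ) ≤ s := hs.1
        have hst : s ≤ t := hs.2
        have hmax : max s 0 = s := max_eq_left hs0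
        have hg' : |g x s| ≤ Cx * ((1 + s) * Real.exp (-lam * s)) := hgbd x hx s hs0
        have hF' : |Fm s| ≤ A * Real.exp (-lam * s) := hFbd s hs0
        have hR : |(μ - β₀ * n₀ * x / m) * g x (max s 0) + DS * (x / m) * Fm s|
            ≤ Kx * (1 + s) * Real.exp (-lam * s) := by
          rw [hmax]
          refine (abs_add_le _ _).trans ?_
          have e1 : |(μ - β₀ * n₀ * x / m) * g x s| ≤ Bx * (Cx * ((1 + s) * Real.exp (-lam * s))) := by
            rw [abs_mul]
            exact mul_le_mul hwb hg' (abs_nonneg _) hBx0.le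
          have e2 : |DS * (x / m) * Fm s| ≤ DS * (x / m) * (A * Real.exp (-lam * s)) := by
            rw [abs_mul, abs_mul, abs_of_nonneg hDS.le, abs_of_nonneg hxm]
            exact mul_le_mul_of_nonneg_left hF' (mul_nonneg hDS.le hxm)
          have e3 : 0 ≤ DS * (x / m) * A := by positivity
          have e4 : 0 ≤ Real.exp (-lam * s) := (Real.exp_pos _).le
          simp only [hKx]
          nlinarith [mul_nonneg (mul_nonneg hBx0.le hCx0) e4,
            mul_nonneg e3 (mul_nonneg hs0 e4), mul_nonneg e3 e4]
        -- combine with exponential factors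
        have hee1 : Real.exp (-DS * (t - s)) ≤ Real.exp (-ν * (t - s)) := by
          refine Real.exp_le_exp.2 ?_
          have := min_le_left DS lam
          nlinarith [hst]
        have hee2 : Real.exp (-lam * s) ≤ Real.exp (-ν * s) := by
          refine Real.exp_le_exp.2 ?_
          have := min_le_right DS lam
          nlinarith [hs0]
        have hee3 : Real.exp (-ν * (t - s)) * Real.exp (-ν * s) = Real.exp (-(ν * t)) := by
          rw [← Real.exp_add]; congr 1; ring
        rw [abs_mul, abs_of_nonneg (Real.exp_pos _).le]
        calc Real.exp (-DS * (t - s)) *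
              |(μ - β₀ * n₀ * x / m) * g x (max s 0) + DS * (x / m) * Fm s|
            ≤ Real.exp (-ν * (t - s)) * (Kx * (1 + s) * Real.exp (-lam * s)) := by
              refine mul_le_mul hee1 hR (abs_nonneg _) (Real.exp_pos _).le
          _ ≤ Real.exp (-ν * (t - s)) * (Kx * (1 + s) * Real.exp (-ν * s)) := by
              refine mul_le_mul_of_nonneg_left ?_ (Real.exp_pos _).le
              refine mul_le_mul_of_nonneg_left hee2 ?_
              positivity
          _ = Kx * (1 + s) * (Real.exp (-ν * (t - s)) * Real.exp (-ν * s)) := by ring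
          _ = Kx * (1 + s) * Real.exp (-(ν * t)) := by rw [hee3]
          _ ≤ Kx * (1 + t) * Real.exp (-(ν * t)) := by
              refine mul_le_mul_of_nonneg_right ?_ (Real.exp_pos _).le
              refine mul_le_mul_of_nonneg_left (by linarith) hKx0
      have hIb : |∫ s in (0:ℝ)..t, Real.exp (-DS * (t - s)) *
            ((μ - β₀ * n₀ * x / m) * g x (max s 0) + DS * (x / m) * Fm s)|
          ≤ t * (Kx * (1 + t) * Real.exp (-(ν * t))) := by
        refine (intervalIntegral.abs_integral_le_integral_abs ht).trans ?_
        have hgEc : Continuous (fun s : ℝ => g x (max s 0)) :=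
          (hgct x hx).comp_continuous (continuous_id.max continuous_const)
            (fun u => le_max_right u 0)
        have hcont : Continuous fun s => |Real.exp (-DS * (t - s)) *
            ((μ - β₀ * n₀ * x / m) * g x (max s 0) + DS * (x / m) * Fm s)| :=
          (((continuous_const.mul (continuous_const.sub continuous_id)).rexp).mul
            ((continuous_const.mul hgEc).add (continuous_const.mul hFmc))).abs
        have h2 : (∫ s in (0:ℝ)..t, |Real.exp (-DS * (t - s)) *
              ((μ - β₀ * n₀ * x / m) * g x (max s 0) + DS * (x / m) * Fm s)|)
            ≤ ∫ s in (0:ℝ)..t, Kx * (1 + t) * Real.exp (-(ν * t)) :=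
          intervalIntegral.integral_mono_on ht (hcont.intervalIntegrable _ _)
            intervalIntegrable_const hRbd
        refine h2.trans ?_
        rw [intervalIntegral.integral_const]
        simp
      have he0 : |Real.exp (-DS * t) * f x 0| ≤ Real.exp (-(ν * t)) * |f x 0| := by
        rw [abs_mul, abs_of_nonneg (Real.exp_pos _).le]
        refine mul_le_mul_of_nonneg_right (Real.exp_le_exp.2 ?_) (abs_nonneg _)
        have := min_le_left DS lam
        have ht' : (0:ℝ) ≤ t := ht
        nlinarith
      have ht' : (0:ℝ) ≤ t := ht
      have hexp0 : (0:ℝ) ≤ Real.exp (-(ν * t)) := (Real.exp_pos _).le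
      have key : Real.exp (-(ν * t)) * |f x 0| + t * (Kx * (1 + t) * Real.exp (-(ν * t)))
          ≤ (|f x 0| + Kx) * ((1 + t)^2 * Real.exp (-(ν * t))) := by
        nlinarith [mul_nonneg (mul_nonneg (abs_nonneg (f x 0)) ht') hexp0,
          mul_nonneg (mul_nonneg (mul_nonneg (abs_nonneg (f x 0)) ht') ht') hexp0,
          mul_nonneg hKx0 hexp0, mul_nonneg (mul_nonneg hKx0 ht') hexp0]
      exact (add_le_add he0 hIb).trans key
    apply squeeze_zero_norm' (a := fun t => (|f x 0| + Kx) * ((1 + t)^2 * Real.exp (-(ν * t))))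
    · filter_upwards [eventually_ge_atTop (0:ℝ)] with t ht
      rw [Real.norm_eq_abs]
      exact hfbd t ht
    · have := (decay2 hν0).const_mul (|f x 0| + Kx)
      simpa using this
end

section
/- Let g : J × ℝ₊ → ℝ be a solution of ∂g/∂t(x,t) = g(x,t)(−μ + β₀n₀x/m − D_I) + D_I(x/m)G(t), where G(t) = ∫₀^{x_max} g(x,t)p(x)dx, with C¹ initial data g₀ satisfying g₀ ≥ 0 on J and ⟨g₀⟩ > 0. Then G(t) > 0 for all t ≥ 0, and g(x,t) > 0 for all x ∈ (0, x_max] and all t > 0. -/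
open Real Set MeasureTheory Filter Function

/-- Positivity for the `g`-equation of the linearization at the DFE:
if `g₀ ≥ 0` with `⟨g₀⟩ > 0`, then `G(t) = ⟨g(·,t)⟩ > 0` for all `t ≥ 0` and
`g(x,t) > 0` for all `x ∈ (0, x_max]` and `t > 0`. -/
theorem positivity_g_linearized
    (xmax m μ β₀ DI n₀ : ℝ) (p : ℝ → ℝ)
    (hxmax : 0 < xmax) (hm : 0 < m) (hμ : 0 < μ) (hβ₀ : 0 < β₀)
    (hDI : 0 < DI) (hn₀ : 0 < n₀)
    (hp_nonneg : ∀ x ∈ Icc (0:ℝ) xmax, 0 ≤ p x) (hp0 : p 0 = 0)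
    (hp_int : ∫ x in (0:ℝ)..xmax, p x = 1)
    (hm_def : m = ∫ x in (0:ℝ)..xmax, x * p x)
    (g : ℝ → ℝ → ℝ)
    (hg_smooth : ContDiffOn ℝ 1 (Function.uncurry g) (Icc 0 xmax ×ˢ Ici 0))
    (hg₀_nonneg : ∀ x ∈ Icc (0:ℝ) xmax, 0 ≤ g x 0)
    (hg₀_mean_pos : 0 < ∫ x in (0:ℝ)..xmax, g x 0 * p x)
    (hgeq : ∀ x ∈ Icc (0:ℝ) xmax, ∀ t ∈ Ici (0:ℝ),
      HasDerivAt (g x)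
        (g x t * (-μ + β₀ * n₀ * x / m - DI) +
          DI * (x / m) * ∫ y in (0:ℝ)..xmax, g y t * p y) t) :
    (∀ t ≥ (0:ℝ), 0 < ∫ x in (0:ℝ)..xmax, g x t * p x) ∧
    ∀ x ∈ Ioc (0:ℝ) xmax, ∀ t > (0:ℝ), 0 < g x t := by
  have hx0 : (0:ℝ) ≤ xmax := hxmax.le
  set G : ℝ → ℝ := fun t => ∫ x in (0:ℝ)..xmax, g x t * p x with hGdef
  -- p is interval integrable
  have hp_ii : IntervalIntegrable p volume 0 xmax := by
    by_contra h
    rw [intervalIntegral.integral_undef h] at hp_int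
    norm_num at hp_int
  have hp_meas : AEStronglyMeasurable p (volume.restrict (uIoc (0:ℝ) xmax)) := by
    rw [uIoc_of_le hx0]
    exact hp_ii.1.aestronglyMeasurable
  -- continuity of the uncurried g
  have hgc : ContinuousOn (Function.uncurry g) (Icc 0 xmax ×ˢ Ici 0) :=
    hg_smooth.continuousOn
  have hgx : ∀ t ∈ Ici (0:ℝ), ContinuousOn (fun x => g x t) (Icc 0 xmax) := by
    intro t ht
    exact hgc.comp ((continuous_id.prodMk continuous_const).continuousOn)
      (fun x hx => ⟨hx, ht⟩)
  have hgt : ∀ x ∈ Icc (0:ℝ) xmax, ContinuousOn (fun t => g x t) (Ici (0:ℝ)) := by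
    intro x hx
    exact hgc.comp ((continuous_const.prodMk continuous_id).continuousOn)
      (fun t ht => ⟨hx, ht⟩)
  -- interval integrability of the slices
  have hii : ∀ t ∈ Ici (0:ℝ), IntervalIntegrable (fun x => g x t * p x) volume 0 xmax := by
    intro t ht
    exact hp_ii.continuousOn_mul ((hgx t ht).mono (by rw [uIcc_of_le hx0]))
  -- continuity of G on Ici 0
  have hGcont : ContinuousOn G (Ici (0:ℝ)) := by
    intro t₀ ht₀
    obtain ⟨C, hC⟩ := (isCompact_Icc.prod isCompact_Icc :
        IsCompact (Icc (0:ℝ) xmax ×ˢ Icc (0:ℝ) (t₀+1))).exists_bound_of_continuousOn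
      (hgc.mono (prod_mono_right Icc_subset_Ici_self))
    have hmem : Icc (0:ℝ) (t₀+1) ∈ nhdsWithin t₀ (Ici (0:ℝ)) := by
      rw [← Ici_inter_Iic]
      exact Filter.inter_mem self_mem_nhdsWithin
        (mem_nhdsWithin_of_mem_nhds (Iic_mem_nhds (by linarith [mem_Ici.mp ht₀])))
    refine intervalIntegral.continuousWithinAt_of_dominated_interval
      (bound := fun x => C * |p x|) ?_ ?_ ?_ ?_
    · filter_upwards [hmem] with t ht
      have hmeas : AEStronglyMeasurable (fun x => g x t) (volume.restrict (uIoc (0:ℝ) xmax)) := by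
        rw [uIoc_of_le hx0]
        exact ((hgx t ht.1).mono Ioc_subset_Icc_self).aestronglyMeasurable measurableSet_Ioc
      exact hmeas.mul hp_meas
    · filter_upwards [hmem] with t ht
      refine ae_of_all _ (fun x hx => ?_)
      rw [uIoc_of_le hx0] at hx
      have hxI : x ∈ Icc (0:ℝ) xmax := Ioc_subset_Icc_self hx
      have := hC (x, t) ⟨hxI, ht⟩
      rw [Real.norm_eq_abs, abs_mul]
      exact mul_le_mul_of_nonneg_right (by simpa [Function.uncurry, Real.norm_eq_abs] using this)
        (abs_nonneg _)
    · exact (hp_ii.norm).const_mul C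
    · refine ae_of_all _ (fun x hx => ?_)
      rw [uIoc_of_le hx0] at hx
      exact (((hgt x (Ioc_subset_Icc_self hx)) t₀ ht₀).mul continuousWithinAt_const)
  -- core positivity lemma
  have L : ∀ T > (0:ℝ), (∀ s ∈ Ico (0:ℝ) T, 0 < G s) → ∀ x ∈ Ioc (0:ℝ) xmax, 0 < g x T := by
    intro T hT hGp x hx
    have hxIcc : x ∈ Icc (0:ℝ) xmax := ⟨hx.1.le, hx.2⟩
    set a : ℝ := -μ + β₀ * n₀ * x / m - DI with ha
    set b : ℝ := DI * (x / m) with hb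
    have hbpos : 0 < b := mul_pos hDI (div_pos hx.1 hm)
    set v : ℝ → ℝ := fun t => Real.exp (-a * t) * g x t with hv
    have hvderiv : ∀ t ∈ Ici (0:ℝ), HasDerivAt v (Real.exp (-a*t) * (b * G t)) t := by
      intro t ht
      have h1 : HasDerivAt (fun t : ℝ => Real.exp (-a*t)) (Real.exp (-a*t) * (-a)) t := by
        simpa using ((hasDerivAt_id t).const_mul (-a)).exp
      have h2 := hgeq x hxIcc t ht
      have h3 : HasDerivAt (fun t => Real.exp (-a*t) * g x t) _ t := h1.mul h2
      convert h3 using 1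
      show Real.exp (-a*t) * (b * G t) = _
      rw [hGdef]
      ring
    have hvmono : StrictMonoOn v (Icc 0 T) := by
      apply strictMonoOn_of_deriv_pos (convex_Icc 0 T)
      · intro t ht
        exact (hvderiv t ht.1).continuousAt.continuousWithinAt
      · intro t ht
        rw [interior_Icc] at ht
        rw [(hvderiv t ht.1.le).deriv]
        exact mul_pos (Real.exp_pos _) (mul_pos hbpos (hGp t ⟨ht.1.le, ht.2⟩))
    have h0T : v 0 < v T := hvmono ⟨le_refl 0, hT.le⟩ ⟨hT.le, le_refl T⟩ hT
    have hv0 : 0 ≤ v 0 := by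
      have : v 0 = g x 0 := by simp [hv]
      rw [this]; exact hg₀_nonneg x hxIcc
    have hvT : 0 < Real.exp (-a*T) * g x T := lt_of_le_of_lt hv0 h0T
    nlinarith [Real.exp_pos (-a*T)]
  -- lemma M : pointwise positivity implies positive mean
  have M : ∀ T ∈ Ici (0:ℝ), (∀ x ∈ Ioc (0:ℝ) xmax, 0 < g x T) → 0 < G T := by
    intro T hT hpos
    refine (intervalIntegral.integral_pos_iff_support_of_nonneg_ae' ?_ (hii T hT)).mpr
      ⟨hxmax, ?_⟩
    · rw [uIoc_of_le hx0]
      filter_upwards [ae_restrict_mem measurableSet_Ioc] with x hx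
      exact mul_nonneg (hpos x hx).le (hp_nonneg x (Ioc_subset_Icc_self hx))
    · by_contra hle
      have h0 : volume (support (fun x => g x T * p x) ∩ Ioc 0 xmax) = 0 := by
        simpa using (not_lt.mp hle)
      have hsub : {x | p x ≠ 0} ∩ Ioc (0:ℝ) xmax ⊆
          support (fun x => g x T * p x) ∩ Ioc 0 xmax := by
        rintro x ⟨hpx, hxI⟩
        refine ⟨?_, hxI⟩
        have hppos : 0 < p x :=
          lt_of_le_of_ne (hp_nonneg x (Ioc_subset_Icc_self hxI)) (Ne.symm hpx)
        exact (mul_pos (hpos x hxI) hppos).ne'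
      have h0' : volume ({x | p x ≠ 0} ∩ Ioc (0:ℝ) xmax) = 0 :=
        measure_mono_null hsub h0
      have hpeq : p =ᵐ[volume.restrict (Ioc (0:ℝ) xmax)] 0 := by
        rw [Filter.EventuallyEq, ae_iff, Measure.restrict_apply' measurableSet_Ioc]
        simpa [Set.setOf_and] using h0'
      have hz : (∫ x in (0:ℝ)..xmax, p x) = 0 := by
        rw [intervalIntegral.integral_of_le hx0]
        rw [integral_congr_ae hpeq]
        simp
      rw [hp_int] at hz
      norm_num at hz
  -- the main argument
  have hG0 : 0 < G 0 := hg₀_mean_pos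
  have hGpos : ∀ t ≥ (0:ℝ), 0 < G t := by
    by_contra hcon
    push_neg at hcon
    obtain ⟨t₁, ht₁, ht₁'⟩ := hcon
    have hAclosed : IsClosed (Ici (0:ℝ) ∩ G ⁻¹' Iic 0) :=
      hGcont.preimage_isClosed_of_isClosed isClosed_Ici isClosed_Iic
    have hAne : (Ici (0:ℝ) ∩ G ⁻¹' Iic 0).Nonempty := ⟨t₁, ht₁, ht₁'⟩
    have hAbdd : BddBelow (Ici (0:ℝ) ∩ G ⁻¹' Iic 0) := ⟨0, fun t ht => ht.1⟩
    set t' := sInf (Ici (0:ℝ) ∩ G ⁻¹' Iic 0) with ht'def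
    have ht'A : t' ∈ Ici (0:ℝ) ∩ G ⁻¹' Iic 0 := hAclosed.csInf_mem hAne hAbdd
    have ht'nonneg : (0:ℝ) ≤ t' := ht'A.1
    have ht'pos : 0 < t' := by
      rcases ht'nonneg.lt_or_eq with h | h
      · exact h
      · exact absurd (h ▸ ht'A.2) (not_le.mpr hG0)
    have hIco : ∀ s ∈ Ico (0:ℝ) t', 0 < G s := by
      intro s hs
      by_contra h
      push_neg at h
      exact absurd (csInf_le hAbdd ⟨hs.1, h⟩) (not_le.mpr hs.2)
    have := M t' ht'nonneg (fun x hx => L t' ht'pos hIco x hx)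
    exact absurd ht'A.2 (not_le.mpr this)
  exact ⟨hGpos, fun x hx t ht => L t ht (fun s hs => hGpos s hs.1) x hx⟩
end

section
/- Let g : J × ℝ₊ → ℝ be a solution of ∂g/∂t(x,t) = g(x,t)(−μ + β₀n₀x/m − D_I) + D_I(x/m)G(t), where G(t) = ∫₀^{x_max} g(x,t)p(x)dx, with C¹ initial data g₀ satisfying g₀ ≥ 0 on J, and suppose g(x,t) ≥ 0 for all (x,t). Then for all t ≥ 0, 0 ≤ G(t) ≤ ⟨g₀⟩ · e^{(−μ + β₀ x_max n₀/m)t}; in particular, if β₀ x_max n₀/m < μ then G(t) → 0 as t → ∞. -/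
open Real Set Filter
open MeasureTheory intervalIntegral Topology
set_option maxHeartbeats 1000000

/-- Exponential bound for `G(t) = ⟨g(·,t)⟩` in the linearization at the DFE:
if `g ≥ 0` then `0 ≤ G(t) ≤ ⟨g₀⟩ e^{(-μ + β₀ x_max n₀/m)t}`; in particular
`G(t) → 0` as `t → ∞` whenever `β₀ x_max n₀/m < μ`. -/
theorem exponential_bound_G_linearized
    (xmax m μ β₀ DI n₀ : ℝ) (p : ℝ → ℝ)
    (hxmax : 0 < xmax) (hm : 0 < m) (hμ : 0 < μ) (hβ₀ : 0 < β₀)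
    (hDI : 0 < DI) (hn₀ : 0 < n₀)
    (hp_nonneg : ∀ x ∈ Icc (0:ℝ) xmax, 0 ≤ p x) (hp0 : p 0 = 0)
    (hp_int : ∫ x in (0:ℝ)..xmax, p x = 1)
    (hm_def : m = ∫ x in (0:ℝ)..xmax, x * p x)
    (g : ℝ → ℝ → ℝ)
    (hg_smooth : ContDiffOn ℝ 1 (Function.uncurry g) (Icc 0 xmax ×ˢ Ici 0))
    (hg₀_nonneg : ∀ x ∈ Icc (0:ℝ) xmax, 0 ≤ g x 0)
    (hg_nonneg : ∀ x ∈ Icc (0:ℝ) xmax, ∀ t ∈ Ici (0:ℝ), 0 ≤ g x t)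
    (hgeq : ∀ x ∈ Icc (0:ℝ) xmax, ∀ t ∈ Ici (0:ℝ),
      HasDerivAt (g x)
        (g x t * (-μ + β₀ * n₀ * x / m - DI) +
          DI * (x / m) * ∫ y in (0:ℝ)..xmax, g y t * p y) t) :
    (∀ t ≥ (0:ℝ),
      0 ≤ (∫ x in (0:ℝ)..xmax, g x t * p x) ∧
      (∫ x in (0:ℝ)..xmax, g x t * p x) ≤
        (∫ x in (0:ℝ)..xmax, g x 0 * p x) *
          Real.exp ((-μ + β₀ * xmax * n₀ / m) * t)) ∧
    (β₀ * xmax * n₀ / m < μ →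
      Tendsto (fun t => ∫ x in (0:ℝ)..xmax, g x t * p x) atTop (nhds 0)) := by
  have hxm : (0:ℝ) ≤ xmax := hxmax.le
  have huIcc : uIcc (0:ℝ) xmax = Icc 0 xmax := uIcc_of_le hxm
  have huIoc : uIoc (0:ℝ) xmax = Ioc 0 xmax := uIoc_of_le hxm
  -- p integrable
  have hpInt : IntervalIntegrable p volume 0 xmax := by
    by_contra h
    rw [intervalIntegral.integral_undef h] at hp_int
    norm_num at hp_int
  have hxpInt : IntervalIntegrable (fun x => x * p x) volume 0 xmax := by
    by_contra h
    rw [intervalIntegral.integral_undef h] at hm_def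
    exact absurd hm_def hm.ne'
  have hpMeas : AEStronglyMeasurable p (volume.restrict (uIoc 0 xmax)) := by
    rw [huIoc]
    exact ((intervalIntegrable_iff_integrableOn_Ioc_of_le hxm).mp hpInt).aestronglyMeasurable
  -- continuity in x
  have hgcont : ∀ t ∈ Ici (0:ℝ), ContinuousOn (fun x => g x t) (Icc 0 xmax) := by
    intro t ht
    exact hg_smooth.continuousOn.comp
      ((continuous_id.prodMk continuous_const).continuousOn) (fun x hx => ⟨hx, ht⟩)
  have hgcontt : ∀ x ∈ Icc (0:ℝ) xmax, ContinuousOn (fun t => g x t) (Ici 0) := by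
    intro x hx
    exact hg_smooth.continuousOn.comp
      ((continuous_const.prodMk continuous_id).continuousOn) (fun t ht => ⟨hx, ht⟩)
  have hIntegrand : ∀ t ∈ Ici (0:ℝ), IntervalIntegrable (fun x => g x t * p x) volume 0 xmax := by
    intro t ht
    exact hpInt.continuousOn_mul (huIcc ▸ hgcont t ht)
  set G : ℝ → ℝ := fun t => ∫ x in (0:ℝ)..xmax, g x t * p x with hGdef
  have hGnonneg : ∀ t ∈ Ici (0:ℝ), 0 ≤ G t := by
    intro t ht
    exact intervalIntegral.integral_nonneg hxm
      (fun x hx => mul_nonneg (hg_nonneg x hx t ht) (hp_nonneg x hx))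
  -- bound on compact time window
  have hBnd : ∀ T : ℝ, 0 ≤ T → ∃ M : ℝ, 0 ≤ M ∧
      (∀ x ∈ Icc (0:ℝ) xmax, ∀ t ∈ Icc (0:ℝ) T, |g x t| ≤ M) ∧
      (∀ t ∈ Icc (0:ℝ) T, G t ≤ M) := by
    intro T hT
    obtain ⟨C, hC⟩ := (isCompact_Icc.prod isCompact_Icc).exists_bound_of_continuousOn
      (hg_smooth.continuousOn.mono (prod_mono subset_rfl (Icc_subset_Ici_self : Icc (0:ℝ) T ⊆ Ici 0)))
    refine ⟨max C 0, le_max_right _ _, ?_, ?_⟩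
    · intro x hx t ht
      have h := hC (x, t) ⟨hx, ht⟩
      rw [Real.norm_eq_abs] at h
      exact h.trans (le_max_left _ _)
    · intro t ht
      have h1 : G t ≤ ∫ x in (0:ℝ)..xmax, max C 0 * p x := by
        apply intervalIntegral.integral_mono_on hxm
          (hIntegrand t (Icc_subset_Ici_self ht)) (hpInt.const_mul _)
        intro x hx
        have h := hC (x, t) ⟨hx, ht⟩
        rw [Real.norm_eq_abs] at h
        have hpx := hp_nonneg x hx
        have h2 : g x t ≤ max C 0 := le_trans (le_abs_self _) (h.trans (le_max_left _ _))
        nlinarith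
      calc G t ≤ ∫ x in (0:ℝ)..xmax, max C 0 * p x := h1
        _ = max C 0 := by rw [intervalIntegral.integral_const_mul, hp_int, mul_one]
  set L : ℝ := -μ + β₀ * xmax * n₀ / m with hLdef
  have hSliceMeas : ∀ t ∈ Ici (0:ℝ),
      AEStronglyMeasurable (fun x => g x t * p x) (volume.restrict (uIoc 0 xmax)) := by
    intro t ht
    rw [huIoc]
    exact (((hgcont t ht).mono Ioc_subset_Icc_self).aestronglyMeasurable
      measurableSet_Ioc).mul (huIoc ▸ hpMeas)
  have hkey : ∀ t₀ : ℝ, 0 < t₀ → ∃ d : ℝ, HasDerivAt G d t₀ ∧ d ≤ L * G t₀ := by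
    intro t₀ ht₀
    obtain ⟨M, hM0, hMg, hMG⟩ := hBnd (t₀ + t₀) (by linarith)
    set C₁ : ℝ := μ + β₀ * n₀ * xmax / m + DI with hC₁
    set K : ℝ := M * C₁ + DI * (xmax / m) * M with hK
    have hballIcc : ∀ t ∈ Metric.ball t₀ t₀, t ∈ Icc (0:ℝ) (t₀ + t₀) := by
      intro t ht
      rw [Real.ball_eq_Ioo] at ht
      exact ⟨by simpa using ht.1.le, by linarith [ht.2]⟩
    have hballpos : ∀ t ∈ Metric.ball t₀ t₀, (0:ℝ) < t := by
      intro t ht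
      rw [Real.ball_eq_Ioo] at ht
      simpa using ht.1
    have main := intervalIntegral.hasDerivAt_integral_of_dominated_loc_of_deriv_le
      (F := fun t x => g x t * p x)
      (F' := fun t x => (g x t * (-μ + β₀ * n₀ * x / m - DI) + DI * (x / m) * G t) * p x)
      (x₀ := t₀) (a := 0) (b := xmax) (bound := fun x => K * p x) (μ := volume)
      (Metric.ball_mem_nhds t₀ ht₀)
      (by
        filter_upwards [Metric.ball_mem_nhds t₀ ht₀] with t ht
        exact hSliceMeas t (hballpos t ht).le)
      (hIntegrand t₀ ht₀.le)
      (by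
        rw [huIoc]
        refine AEStronglyMeasurable.mul ?_ (huIoc ▸ hpMeas)
        refine ContinuousOn.aestronglyMeasurable ?_ measurableSet_Ioc
        refine ContinuousOn.mono ?_ (Ioc_subset_Icc_self : Ioc (0:ℝ) xmax ⊆ Icc 0 xmax)
        exact ((hgcont t₀ ht₀.le).mul (by fun_prop)).add (by fun_prop))
      (by
        refine ae_of_all _ ?_
        intro x hx t ht
        rw [huIoc] at hx
        have hxI : x ∈ Icc (0:ℝ) xmax := Ioc_subset_Icc_self hx
        have htI : t ∈ Icc (0:ℝ) (t₀ + t₀) := hballIcc t ht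
        have hgb : |g x t| ≤ M := hMg x hxI t htI
        have hGb : |G t| ≤ M := by
          rw [abs_of_nonneg (hGnonneg t htI.1)]; exact hMG t htI
        have hx0 : 0 ≤ x := hxI.1
        have hxm' : x ≤ xmax := hxI.2
        have hd1 : 0 ≤ β₀ * n₀ * x / m := div_nonneg (by positivity) hm.le
        have hd2 : β₀ * n₀ * x / m ≤ β₀ * n₀ * xmax / m :=
          (div_le_div_iff_of_pos_right hm).mpr
            (by nlinarith [mul_le_mul_of_nonneg_left hxm' (mul_nonneg hβ₀.le hn₀.le)])
        have hc : |(-μ + β₀ * n₀ * x / m - DI)| ≤ C₁ := by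
          rw [abs_le]; constructor <;> [skip; skip] <;> simp only [hC₁] <;> nlinarith
        have hxdm : 0 ≤ x / m := div_nonneg hx0 hm.le
        have hxdm2 : x / m ≤ xmax / m := (div_le_div_iff_of_pos_right hm).mpr hxm'
        have h1 : |g x t * (-μ + β₀ * n₀ * x / m - DI)| ≤ M * C₁ := by
          rw [abs_mul]
          exact mul_le_mul hgb hc (abs_nonneg _) hM0
        have h2 : |DI * (x / m) * G t| ≤ DI * (xmax / m) * M := by
          rw [abs_mul, abs_mul, abs_of_nonneg hDI.le, abs_of_nonneg hxdm]
          have : DI * (x / m) ≤ DI * (xmax / m) := by nlinarith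
          exact mul_le_mul this hGb (abs_nonneg _) (by positivity)
        have hsum : |g x t * (-μ + β₀ * n₀ * x / m - DI) + DI * (x / m) * G t| ≤ K := by
          calc _ ≤ _ := abs_add_le _ _
            _ ≤ K := by rw [hK]; exact add_le_add h1 h2
        have hpx := hp_nonneg x hxI
        calc ‖(g x t * (-μ + β₀ * n₀ * x / m - DI) + DI * (x / m) * G t) * p x‖
            = |g x t * (-μ + β₀ * n₀ * x / m - DI) + DI * (x / m) * G t| * p x := by
              rw [Real.norm_eq_abs, abs_mul, abs_of_nonneg hpx]
          _ ≤ K * p x := mul_le_mul_of_nonneg_right hsum hpx)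
      (hpInt.const_mul K)
      (by
        refine ae_of_all _ ?_
        intro x hx t ht
        rw [huIoc] at hx
        exact (hgeq x (Ioc_subset_Icc_self hx) t (hballpos t ht).le).mul_const (p x))
    obtain ⟨hF'int, hder⟩ := main
    refine ⟨_, hder, ?_⟩
    -- now bound the derivative
    have hInt1 : IntervalIntegrable
        (fun x => (g x t₀ * (-μ + β₀ * n₀ * x / m - DI)) * p x) volume 0 xmax := by
      refine hpInt.continuousOn_mul ?_
      rw [huIcc]
      exact (hgcont t₀ ht₀.le).mul (by fun_prop)
    have hInt2 : IntervalIntegrable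
        (fun x => (DI * (x / m) * G t₀) * p x) volume 0 xmax := by
      have he : (fun x => (DI * (x / m) * G t₀) * p x)
          = fun x => (DI * G t₀ / m) * (x * p x) := by
        funext x; field_simp
      rw [he]
      exact hxpInt.const_mul _
    have hsplit : (∫ x in (0:ℝ)..xmax,
        (g x t₀ * (-μ + β₀ * n₀ * x / m - DI) + DI * (x / m) * G t₀) * p x)
        = (∫ x in (0:ℝ)..xmax, (g x t₀ * (-μ + β₀ * n₀ * x / m - DI)) * p x)
          + DI * G t₀ := by
      have he : (fun x => (g x t₀ * (-μ + β₀ * n₀ * x / m - DI) + DI * (x / m) * G t₀) * p x)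
          = fun x => (g x t₀ * (-μ + β₀ * n₀ * x / m - DI)) * p x
            + (DI * (x / m) * G t₀) * p x := by
        funext x; ring
      rw [intervalIntegral.integral_congr (fun x _ => congrFun he x),
        intervalIntegral.integral_add hInt1 hInt2]
      congr 1
      have he2 : (fun x => (DI * (x / m) * G t₀) * p x)
          = fun x => (DI * G t₀ / m) * (x * p x) := by
        funext x; field_simp
      rw [he2, intervalIntegral.integral_const_mul, ← hm_def]
      field_simp
    have h1le : (∫ x in (0:ℝ)..xmax, (g x t₀ * (-μ + β₀ * n₀ * x / m - DI)) * p x)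
        ≤ (L - DI) * G t₀ := by
      have hmono := intervalIntegral.integral_mono_on hxm hInt1
        ((hIntegrand t₀ ht₀.le).const_mul (L - DI)) (fun x hx => by
          have hgp : 0 ≤ g x t₀ * p x :=
            mul_nonneg (hg_nonneg x hx t₀ ht₀.le) (hp_nonneg x hx)
          have hd2 : β₀ * n₀ * x / m ≤ β₀ * xmax * n₀ / m :=
            (div_le_div_iff_of_pos_right hm).mpr
              (by nlinarith [mul_le_mul_of_nonneg_left hx.2 (mul_nonneg hβ₀.le hn₀.le)])
          have hc : -μ + β₀ * n₀ * x / m - DI ≤ L - DI := by rw [hLdef]; linarith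
          nlinarith [mul_le_mul_of_nonneg_left hc hgp])
      calc _ ≤ ∫ x in (0:ℝ)..xmax, (L - DI) * (g x t₀ * p x) := hmono
        _ = (L - DI) * G t₀ := by rw [intervalIntegral.integral_const_mul]
    calc (∫ x in (0:ℝ)..xmax,
        (g x t₀ * (-μ + β₀ * n₀ * x / m - DI) + DI * (x / m) * G t₀) * p x)
        = _ + DI * G t₀ := hsplit
      _ ≤ (L - DI) * G t₀ + DI * G t₀ := by linarith
      _ = L * G t₀ := by ring
  -- continuity of G on Ici 0
  have hGcont : ContinuousOn G (Ici 0) := by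
    intro t₀ ht₀
    obtain ⟨M, hM0, hMg, _⟩ := hBnd (t₀ + 1) (by simp at ht₀; linarith)
    rw [hGdef]
    refine intervalIntegral.continuousWithinAt_of_dominated_interval
      (bound := fun x => M * p x) (F := fun t x => g x t * p x) ?_ ?_ ?_ ?_
    · filter_upwards [self_mem_nhdsWithin] with t ht
      exact hSliceMeas t ht
    · have hev : ∀ᶠ t in 𝓝[Ici 0] t₀, t ∈ Ici (0:ℝ) ∧ t < t₀ + 1 := by
        refine Filter.eventually_and.mpr ⟨self_mem_nhdsWithin, ?_⟩
        exact eventually_nhdsWithin_of_eventually_nhds (eventually_lt_nhds (by linarith))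
      filter_upwards [hev] with t ht
      refine ae_of_all _ ?_
      intro x hx
      rw [huIoc] at hx
      have hxI : x ∈ Icc (0:ℝ) xmax := Ioc_subset_Icc_self hx
      have hpx := hp_nonneg x hxI
      calc ‖g x t * p x‖ = |g x t| * p x := by
            rw [Real.norm_eq_abs, abs_mul, abs_of_nonneg hpx]
        _ ≤ M * p x := mul_le_mul_of_nonneg_right
            (hMg x hxI t ⟨ht.1, ht.2.le⟩) hpx
    · exact hpInt.const_mul M
    · refine ae_of_all _ ?_
      intro x hx
      rw [huIoc] at hx
      have hxI : x ∈ Icc (0:ℝ) xmax := Ioc_subset_Icc_self hx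
      exact (((hgcontt x hxI) t₀ ht₀).mono (subset_refl _)).mul continuousWithinAt_const
  -- the auxiliary function ψ
  set ψ : ℝ → ℝ := fun t => Real.exp (-L * t) * G t with hψdef
  have hψderiv : ∀ t₀ ∈ Ioi (0:ℝ), ∃ d ≤ 0, HasDerivAt ψ d t₀ := by
    intro t₀ ht₀
    obtain ⟨d, hd, hdle⟩ := hkey t₀ ht₀
    have h1 : HasDerivAt (fun t : ℝ => -L * t) (-L) t₀ := by
      simpa using (hasDerivAt_id t₀).const_mul (-L)
    have hexp : HasDerivAt (fun t => Real.exp (-L * t)) (Real.exp (-L * t₀) * (-L)) t₀ := by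
      simpa [Function.comp_def] using (Real.hasDerivAt_exp (-L * t₀)).comp t₀ h1
    have := hexp.mul hd
    refine ⟨_, ?_, this⟩
    have hexppos := Real.exp_pos (-L * t₀)
    nlinarith [hGnonneg t₀ (mem_Ici.mpr (le_of_lt (mem_Ioi.mp ht₀)))]
  have hψanti : AntitoneOn ψ (Ici 0) := by
    have hψcont : ContinuousOn ψ (Ici 0) :=
      ((Real.continuous_exp.comp (continuous_const.mul continuous_id)).continuousOn).mul hGcont
    have hdiff : DifferentiableOn ℝ ψ (interior (Ici (0:ℝ))) := by
      rw [interior_Ici]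
      intro t ht
      obtain ⟨d, _, hd⟩ := hψderiv t ht
      exact hd.differentiableAt.differentiableWithinAt
    refine antitoneOn_of_deriv_nonpos (convex_Ici 0) hψcont hdiff ?_
    rw [interior_Ici]
    intro t ht
    obtain ⟨d, hd0, hd⟩ := hψderiv t ht
    rw [hd.deriv]
    exact hd0
  have hmain : ∀ t ≥ (0:ℝ), 0 ≤ G t ∧ G t ≤ G 0 * Real.exp (L * t) := by
    intro t ht
    refine ⟨hGnonneg t ht, ?_⟩
    have h := hψanti (self_mem_Ici) (mem_Ici.mpr ht) ht
    have hψ0 : ψ 0 = G 0 := by rw [hψdef]; simp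
    have hψt : ψ t = Real.exp (-L * t) * G t := rfl
    rw [hψ0, hψt] at h
    have hepos := Real.exp_pos (L * t)
    have := mul_le_mul_of_nonneg_left h hepos.le
    have hprod : Real.exp (L * t) * (Real.exp (-L * t) * G t) = G t := by
      rw [← mul_assoc, ← Real.exp_add]
      ring_nf
      simp
    rw [hprod] at this
    linarith [this]
  constructor
  · intro t ht
    exact hmain t ht
  · intro hlt
    have hL : L < 0 := by rw [hLdef]; linarith
    have hbot : Tendsto (fun t : ℝ => L * t) atTop atBot :=
      (tendsto_const_mul_atBot_of_neg hL).mpr tendsto_id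
    have hexp0 : Tendsto (fun t : ℝ => Real.exp (L * t)) atTop (𝓝 0) :=
      Real.tendsto_exp_comp_nhds_zero.mpr hbot
    have hbound : Tendsto (fun t : ℝ => G 0 * Real.exp (L * t)) atTop (𝓝 0) := by
      simpa using hexp0.const_mul (G 0)
    refine squeeze_zero' ?_ ?_ hbound
    · filter_upwards [eventually_ge_atTop (0:ℝ)] with t ht
      exact (hmain t ht).1
    · filter_upwards [eventually_ge_atTop (0:ℝ)] with t ht
      exact (hmain t ht).2
end

section
/- Let (S, I) be a nonnegative solution of system (C) on J × ℝ₊ with initial data (S₀, I₀), and set N = S + I. Assume there exists C ≥ 1 such that 0 ≤ N(x,0) ≤ C n₀ (x/m) for all x ∈ J. Let d = min(D_I, D_S), D = max(D_I, D_S) and C̃ = max(C, D/d) ≥ 1. Then for all x ∈ J and all t ≥ 0, 0 ≤ N(x,t) ≤ C̃ n₀ (x/m). -/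
open Real Set MeasureTheory intervalIntegral

lemma int_abs_bound (a b M : ℝ) (hab : a ≤ b) (f p : ℝ → ℝ)
    (hfp : IntervalIntegrable (fun y => f y * p y) volume a b)
    (hp : IntervalIntegrable p volume a b)
    (hf : ∀ y ∈ Icc a b, |f y| ≤ M) :
    |∫ y in a..b, f y * p y| ≤ M * ∫ y in a..b, |p y| := by
  calc |∫ y in a..b, f y * p y| ≤ ∫ y in a..b, |f y * p y| :=
        intervalIntegral.abs_integral_le_integral_abs hab
    _ ≤ ∫ y in a..b, M * |p y| := by
        apply intervalIntegral.integral_mono_on hab hfp.abs (hp.abs.const_mul M)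
        intro y hy
        rw [abs_mul]
        exact mul_le_mul_of_nonneg_right (hf y hy) (abs_nonneg _)
    _ = M * ∫ y in a..b, |p y| := intervalIntegral.integral_const_mul _ _


/-- Lemma 5.1 (1): a priori bound for the total density `N = S + I` of a nonnegative
solution of system `(C)`: if `0 ≤ N(x,0) ≤ C n₀ x/m` with `C ≥ 1`, then
`0 ≤ N(x,t) ≤ C̃ n₀ x/m` for all `t ≥ 0`, where `C̃ = max(C, D/d)`,
`d = min(D_I,D_S)`, `D = max(D_I,D_S)`. -/
theorem apriori_bound_N
    (xmax m μ β₀ DS DI : ℝ) (p : ℝ → ℝ)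
    (hxmax : 0 < xmax) (hm : 0 < m) (hμ : 0 < μ) (hβ₀ : 0 < β₀)
    (hDS : 0 < DS) (hDI : 0 < DI)
    (hp_nonneg : ∀ x ∈ Icc (0:ℝ) xmax, 0 ≤ p x) (hp0 : p 0 = 0)
    (hp_int : ∫ x in (0:ℝ)..xmax, p x = 1)
    (hm_def : m = ∫ x in (0:ℝ)..xmax, x * p x)
    (S₀ I₀ : ℝ → ℝ)
    (hS₀ : ContDiff ℝ 1 S₀) (hI₀ : ContDiff ℝ 1 I₀)
    (hS₀nonneg : ∀ x ∈ Icc (0:ℝ) xmax, 0 ≤ S₀ x)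
    (hI₀nonneg : ∀ x ∈ Icc (0:ℝ) xmax, 0 ≤ I₀ x)
    (hS₀zero : S₀ 0 = 0) (hI₀zero : I₀ 0 = 0)
    (n₀ : ℝ)
    (hn₀ : n₀ = (∫ x in (0:ℝ)..xmax, S₀ x * p x) + ∫ x in (0:ℝ)..xmax, I₀ x * p x)
    (hn₀pos : 0 < n₀)
    (C : ℝ) (hC : 1 ≤ C)
    (hN0 : ∀ x ∈ Icc (0:ℝ) xmax, S₀ x + I₀ x ≤ C * n₀ * (x / m))
    (S I : ℝ → ℝ → ℝ)
    (hS_smooth : ContDiffOn ℝ 1 (Function.uncurry S) (Icc 0 xmax ×ˢ Ici 0))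
    (hI_smooth : ContDiffOn ℝ 1 (Function.uncurry I) (Icc 0 xmax ×ˢ Ici 0))
    (hSeq : ∀ x ∈ Icc (0:ℝ) xmax, ∀ t ∈ Ici (0:ℝ),
      HasDerivAt (S x)
        (I x t * (μ - β₀ * S x t) -
          DS * (S x t - x / m * ∫ y in (0:ℝ)..xmax, S y t * p y)) t)
    (hIeq : ∀ x ∈ Icc (0:ℝ) xmax, ∀ t ∈ Ici (0:ℝ),
      HasDerivAt (I x)
        (I x t * (-μ + β₀ * S x t) -
          DI * (I x t - x / m * ∫ y in (0:ℝ)..xmax, I y t * p y)) t)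
    (hSinit : ∀ x ∈ Icc (0:ℝ) xmax, S x 0 = S₀ x)
    (hIinit : ∀ x ∈ Icc (0:ℝ) xmax, I x 0 = I₀ x)
    (hSnonneg : ∀ x ∈ Icc (0:ℝ) xmax, ∀ t ∈ Ici (0:ℝ), 0 ≤ S x t)
    (hInonneg : ∀ x ∈ Icc (0:ℝ) xmax, ∀ t ∈ Ici (0:ℝ), 0 ≤ I x t) :
    ∀ x ∈ Icc (0:ℝ) xmax, ∀ t ∈ Ici (0:ℝ),
      0 ≤ S x t + I x t ∧
      S x t + I x t ≤ max C (max DI DS / min DI DS) * n₀ * (x / m) := by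
  have hxm0 : (0:ℝ) ≤ xmax := hxmax.le
  have hIoc : uIoc (0:ℝ) xmax = Ioc 0 xmax := uIoc_of_le hxm0
  have huIcc : uIcc (0:ℝ) xmax = Icc 0 xmax := uIcc_of_le hxm0
  -- integrability of p and x*p
  have hpInt : IntervalIntegrable p volume 0 xmax := by
    by_contra h
    rw [intervalIntegral.integral_undef h] at hp_int
    norm_num at hp_int
  have hxpInt : IntervalIntegrable (fun x => x * p x) volume 0 xmax := by
    by_contra h
    rw [intervalIntegral.integral_undef h] at hm_def
    exact absurd hm_def hm.ne'
  -- continuity in y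
  have hScY : ∀ t ∈ Ici (0:ℝ), ContinuousOn (fun y => S y t) (Icc 0 xmax) := by
    intro t ht
    have : ContinuousOn (Function.uncurry S ∘ fun y => (y, t)) (Icc 0 xmax) :=
      hS_smooth.continuousOn.comp ((continuous_id.prodMk continuous_const).continuousOn)
        (fun y hy => ⟨hy, ht⟩)
    exact this
  have hIcY : ∀ t ∈ Ici (0:ℝ), ContinuousOn (fun y => I y t) (Icc 0 xmax) := by
    intro t ht
    have : ContinuousOn (Function.uncurry I ∘ fun y => (y, t)) (Icc 0 xmax) :=
      hI_smooth.continuousOn.comp ((continuous_id.prodMk continuous_const).continuousOn)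
        (fun y hy => ⟨hy, ht⟩)
    exact this
  -- integrability of S p, I p at each time
  have hSpInt : ∀ t ∈ Ici (0:ℝ), IntervalIntegrable (fun y => S y t * p y) volume 0 xmax := by
    intro t ht
    exact hpInt.continuousOn_mul (huIcc ▸ hScY t ht)
  have hIpInt : ∀ t ∈ Ici (0:ℝ), IntervalIntegrable (fun y => I y t * p y) volume 0 xmax := by
    intro t ht
    exact hpInt.continuousOn_mul (huIcc ▸ hIcY t ht)
  -- nonnegativity of the mean values
  have hsnn : ∀ t ∈ Ici (0:ℝ), 0 ≤ ∫ y in (0:ℝ)..xmax, S y t * p y := by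
    intro t ht
    exact intervalIntegral.integral_nonneg hxm0
      (fun y hy => mul_nonneg (hSnonneg y hy t ht) (hp_nonneg y hy))
  have hinn : ∀ t ∈ Ici (0:ℝ), 0 ≤ ∫ y in (0:ℝ)..xmax, I y t * p y := by
    intro t ht
    exact intervalIntegral.integral_nonneg hxm0
      (fun y hy => mul_nonneg (hInonneg y hy t ht) (hp_nonneg y hy))
  -- uniform bound on compact time intervals
  have hbdd : ∀ T : ℝ, ∃ M, 0 ≤ M ∧
      ∀ y ∈ Icc (0:ℝ) xmax, ∀ τ ∈ Icc (0:ℝ) T, |S y τ| ≤ M ∧ |I y τ| ≤ M := by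
    intro T
    have hsub : (Icc (0:ℝ) xmax ×ˢ Icc (0:ℝ) T) ⊆ Icc 0 xmax ×ˢ Ici 0 :=
      prod_mono_right Icc_subset_Ici_self
    obtain ⟨M1, hM1⟩ := (isCompact_Icc.prod isCompact_Icc).exists_bound_of_continuousOn
      (hS_smooth.continuousOn.mono hsub)
    obtain ⟨M2, hM2⟩ := (isCompact_Icc.prod isCompact_Icc).exists_bound_of_continuousOn
      (hI_smooth.continuousOn.mono hsub)
    refine ⟨max 0 (max M1 M2), le_max_left _ _, fun y hy τ hτ => ⟨?_, ?_⟩⟩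
    · have := hM1 (y, τ) ⟨hy, hτ⟩
      rw [Real.norm_eq_abs] at this
      calc |S y τ| ≤ M1 := this
        _ ≤ _ := le_max_of_le_right (le_max_left _ _)
    · have := hM2 (y, τ) ⟨hy, hτ⟩
      rw [Real.norm_eq_abs] at this
      calc |I y τ| ≤ M2 := this
        _ ≤ _ := le_max_of_le_right (le_max_right _ _)
  -- the derivative of N(x,·) in nice form
  have hND : ∀ x ∈ Icc (0:ℝ) xmax, ∀ t ∈ Ici (0:ℝ),
      HasDerivAt (fun τ => S x τ + I x τ)
        (-(DS * (S x t - x / m * ∫ y in (0:ℝ)..xmax, S y t * p y))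
          - DI * (I x t - x / m * ∫ y in (0:ℝ)..xmax, I y t * p y)) t := by
    intro x hx t ht
    have := (hSeq x hx t ht).add (hIeq x hx t ht)
    exact this.congr_deriv (by ring)
  -- measurability of p on the interval
  have hpAE : AEStronglyMeasurable p (volume.restrict (Ioc 0 xmax)) :=
    hpInt.1.aestronglyMeasurable

  -- conservation: n(t) = n₀ for all t ≥ 0
  have hNpInt : ∀ t ∈ Ici (0:ℝ),
      IntervalIntegrable (fun y => (S y t + I y t) * p y) volume 0 xmax := by
    intro t ht
    exact hpInt.continuousOn_mul (huIcc ▸ ((hScY t ht).add (hIcY t ht)))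
  have hsplit : ∀ t ∈ Ici (0:ℝ),
      (∫ y in (0:ℝ)..xmax, (S y t + I y t) * p y)
        = (∫ y in (0:ℝ)..xmax, S y t * p y) + ∫ y in (0:ℝ)..xmax, I y t * p y := by
    intro t ht
    rw [show (fun y => (S y t + I y t) * p y)
        = fun y => S y t * p y + I y t * p y from funext fun y => by ring]
    exact intervalIntegral.integral_add (hSpInt t ht) (hIpInt t ht)
  have hn0 : (∫ y in (0:ℝ)..xmax, (S y 0 + I y 0) * p y) = n₀ := by
    have h1 : ∀ y ∈ uIcc (0:ℝ) xmax, (S y 0 + I y 0) * p y = S₀ y * p y + I₀ y * p y := by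
      intro y hy
      rw [huIcc] at hy
      rw [hSinit y hy, hIinit y hy]; ring
    rw [intervalIntegral.integral_congr h1,
      intervalIntegral.integral_add
        (hpInt.continuousOn_mul hS₀.continuous.continuousOn)
        (hpInt.continuousOn_mul hI₀.continuous.continuousOn), hn₀]
  have hder : ∀ t₀ : ℝ, 0 < t₀ →
      HasDerivAt (fun τ => ∫ y in (0:ℝ)..xmax, (S y τ + I y τ) * p y) 0 t₀ := by
    intro t₀ ht₀
    obtain ⟨M, hM0, hMb⟩ := hbdd (t₀ + 1)
    set Mp := ∫ y in (0:ℝ)..xmax, |p y| with hMp_def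
    have hMp : 0 ≤ Mp := intervalIntegral.integral_nonneg hxm0 (fun y _ => abs_nonneg _)
    set ε := min t₀ 1 / 2 with hε_def
    have hε : 0 < ε := by positivity
    have hball : ∀ τ ∈ Metric.ball t₀ ε, 0 < τ ∧ τ ≤ t₀ + 1 := by
      intro τ hτ
      rw [Metric.mem_ball, Real.dist_eq] at hτ
      have h1 := abs_lt.1 hτ
      have h2 : ε ≤ t₀ / 2 := by
        rw [hε_def]; gcongr; exact min_le_left _ _
      have h3 : ε ≤ 1 / 2 := by
        rw [hε_def]; gcongr; exact min_le_right _ _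
      constructor <;> linarith
    set U := xmax / m * (M * Mp) with hU_def
    have hU : 0 ≤ U := by positivity
    -- the bound on each mean value
    have hmean : ∀ τ, 0 ≤ τ → τ ≤ t₀ + 1 →
        |∫ y in (0:ℝ)..xmax, S y τ * p y| ≤ M * Mp ∧
        |∫ y in (0:ℝ)..xmax, I y τ * p y| ≤ M * Mp := by
      intro τ h1 h2
      constructor
      · exact int_abs_bound 0 xmax M hxm0 _ p (hSpInt τ h1) hpInt
          (fun y hy => (hMb y hy τ ⟨h1, h2⟩).1)
      · exact int_abs_bound 0 xmax M hxm0 _ p (hIpInt τ h1) hpInt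
          (fun y hy => (hMb y hy τ ⟨h1, h2⟩).2)
    -- pointwise bound on E
    have hE : ∀ y ∈ Icc (0:ℝ) xmax, ∀ τ, 0 ≤ τ → τ ≤ t₀ + 1 →
        |(-(DS * (S y τ - y / m * ∫ z in (0:ℝ)..xmax, S z τ * p z))
          - DI * (I y τ - y / m * ∫ z in (0:ℝ)..xmax, I z τ * p z))|
          ≤ (DS + DI) * (M + U) := by
      intro y hy τ h1 h2
      obtain ⟨hs1, hs2⟩ := hmean τ h1 h2
      obtain ⟨hb1, hb2⟩ := hMb y hy τ ⟨h1, h2⟩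
      have hym : 0 ≤ y / m := div_nonneg hy.1 hm.le
      have hyx : y / m ≤ xmax / m := by gcongr; exact hy.2
      have hprod1 : |y / m * ∫ z in (0:ℝ)..xmax, S z τ * p z| ≤ U := by
        rw [abs_mul, abs_of_nonneg hym, hU_def]
        exact mul_le_mul hyx hs1 (abs_nonneg _) (div_nonneg hxm0 hm.le)
      have hprod2 : |y / m * ∫ z in (0:ℝ)..xmax, I z τ * p z| ≤ U := by
        rw [abs_mul, abs_of_nonneg hym, hU_def]
        exact mul_le_mul hyx hs2 (abs_nonneg _) (div_nonneg hxm0 hm.le)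
      calc |(-(DS * (S y τ - y / m * ∫ z in (0:ℝ)..xmax, S z τ * p z))
          - DI * (I y τ - y / m * ∫ z in (0:ℝ)..xmax, I z τ * p z))|
          ≤ |(-(DS * (S y τ - y / m * ∫ z in (0:ℝ)..xmax, S z τ * p z)))|
            + |DI * (I y τ - y / m * ∫ z in (0:ℝ)..xmax, I z τ * p z)| := abs_sub _ _
        _ = DS * |S y τ - y / m * ∫ z in (0:ℝ)..xmax, S z τ * p z|
            + DI * |I y τ - y / m * ∫ z in (0:ℝ)..xmax, I z τ * p z| := by
            rw [abs_neg, abs_mul, abs_mul, abs_of_pos hDS, abs_of_pos hDI]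
        _ ≤ DS * (M + U) + DI * (M + U) := by
            gcongr
            · exact (abs_sub _ _).trans (add_le_add hb1 hprod1)
            · exact (abs_sub _ _).trans (add_le_add hb2 hprod2)
        _ = (DS + DI) * (M + U) := by ring
    have key := intervalIntegral.hasDerivAt_integral_of_dominated_loc_of_deriv_le
      (F := fun τ y => (S y τ + I y τ) * p y)
      (F' := fun τ y => (-(DS * (S y τ - y / m * ∫ z in (0:ℝ)..xmax, S z τ * p z))
          - DI * (I y τ - y / m * ∫ z in (0:ℝ)..xmax, I z τ * p z)) * p y)
      (a := 0) (b := xmax) (μ := volume) (x₀ := t₀)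
      (bound := fun y => ((DS + DI) * (M + U)) * |p y|) (Metric.ball_mem_nhds t₀ hε) ?_ ?_ ?_ ?_ ?_ ?_
    · -- conclude: the integral of F' t₀ is zero
      have hzero : (∫ y in (0:ℝ)..xmax,
          (-(DS * (S y t₀ - y / m * ∫ z in (0:ℝ)..xmax, S z t₀ * p z))
            - DI * (I y t₀ - y / m * ∫ z in (0:ℝ)..xmax, I z t₀ * p z)) * p y) = 0 := by
        set c1 := ∫ z in (0:ℝ)..xmax, S z t₀ * p z with hc1
        set c2 := ∫ z in (0:ℝ)..xmax, I z t₀ * p z with hc2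
        have hcg : (fun y => (-(DS * (S y t₀ - y / m * c1)) - DI * (I y t₀ - y / m * c2)) * p y)
            = fun y => (-DS) * (S y t₀ * p y) + ((-DI) * (I y t₀ * p y)
              + ((DS * c1 + DI * c2) / m) * (y * p y)) := funext fun y => by ring
        rw [hcg, intervalIntegral.integral_add ((hSpInt t₀ ht₀.le).const_mul _)
            (((hIpInt t₀ ht₀.le).const_mul _).add (hxpInt.const_mul _)),
          intervalIntegral.integral_add ((hIpInt t₀ ht₀.le).const_mul _) (hxpInt.const_mul _),
          intervalIntegral.integral_const_mul, intervalIntegral.integral_const_mul,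
          intervalIntegral.integral_const_mul, ← hc1, ← hc2, ← hm_def]
        field_simp
        ring
      rw [hzero] at key
      exact key.2
    · -- measurability of F τ near t₀
      filter_upwards [Metric.ball_mem_nhds t₀ hε] with τ hτ
      rw [hIoc]
      have h0τ := (hball τ hτ).1.le
      exact ((((hScY τ h0τ).mono Ioc_subset_Icc_self).add
        ((hIcY τ h0τ).mono Ioc_subset_Icc_self)).aestronglyMeasurable
        measurableSet_Ioc).mul hpAE
    · exact hNpInt t₀ ht₀.le
    · -- measurability of F' t₀
      rw [hIoc]
      have hc1 : Continuous fun y : ℝ => y / m * ∫ z in (0:ℝ)..xmax, S z t₀ * p z :=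
        (continuous_id.div_const m).mul continuous_const
      have hc2 : Continuous fun y : ℝ => y / m * ∫ z in (0:ℝ)..xmax, I z t₀ * p z :=
        (continuous_id.div_const m).mul continuous_const
      have hcE : ContinuousOn (fun y =>
          (-(DS * (S y t₀ - y / m * ∫ z in (0:ℝ)..xmax, S z t₀ * p z))
            - DI * (I y t₀ - y / m * ∫ z in (0:ℝ)..xmax, I z t₀ * p z))) (Ioc 0 xmax) := by
        apply ContinuousOn.sub
        · exact (continuousOn_const.mul (((hScY t₀ ht₀.le).mono Ioc_subset_Icc_self).sub
            hc1.continuousOn)).neg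
        · exact continuousOn_const.mul (((hIcY t₀ ht₀.le).mono Ioc_subset_Icc_self).sub
            hc2.continuousOn)
      exact (hcE.aestronglyMeasurable measurableSet_Ioc).mul hpAE
    · -- the uniform bound
      apply ae_of_all
      intro y hy τ hτ
      rw [hIoc] at hy
      have hyI : y ∈ Icc (0:ℝ) xmax := Ioc_subset_Icc_self hy
      obtain ⟨h1, h2⟩ := hball τ hτ
      rw [Real.norm_eq_abs, abs_mul]
      exact mul_le_mul_of_nonneg_right (hE y hyI τ h1.le h2) (abs_nonneg _)
    · exact hpInt.abs.const_mul _
    · -- differentiability in the parameter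
      apply ae_of_all
      intro y hy τ hτ
      rw [hIoc] at hy
      have hyI : y ∈ Icc (0:ℝ) xmax := Ioc_subset_Icc_self hy
      obtain ⟨h1, h2⟩ := hball τ hτ
      exact (hND y hyI τ h1.le).mul_const (p y)
  have hcont0 : ContinuousWithinAt
      (fun τ => ∫ y in (0:ℝ)..xmax, (S y τ + I y τ) * p y) (Ioi 0) 0 := by
    obtain ⟨M, hM0, hMb⟩ := hbdd 1
    apply intervalIntegral.continuousWithinAt_of_dominated_interval
      (bound := fun y => (2 * M) * |p y|)
    · filter_upwards [Ioc_mem_nhdsGT_of_mem (left_mem_Ico.2 zero_lt_one)] with τ hτ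
      rw [hIoc]
      exact ((((hScY τ hτ.1.le).mono Ioc_subset_Icc_self).add
        ((hIcY τ hτ.1.le).mono Ioc_subset_Icc_self)).aestronglyMeasurable
        measurableSet_Ioc).mul hpAE
    · filter_upwards [Ioc_mem_nhdsGT_of_mem (left_mem_Ico.2 zero_lt_one)] with τ hτ
      apply ae_of_all
      intro y hy
      rw [hIoc] at hy
      have hyI : y ∈ Icc (0:ℝ) xmax := Ioc_subset_Icc_self hy
      obtain ⟨hb1, hb2⟩ := hMb y hyI τ ⟨hτ.1.le, hτ.2⟩
      rw [Real.norm_eq_abs, abs_mul]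
      have : |S y τ + I y τ| ≤ 2 * M := (abs_add_le _ _).trans (by linarith)
      exact mul_le_mul_of_nonneg_right this (abs_nonneg _)
    · exact hpInt.abs.const_mul _
    · apply ae_of_all
      intro y hy
      rw [hIoc] at hy
      have hyI : y ∈ Icc (0:ℝ) xmax := Ioc_subset_Icc_self hy
      exact (((hND y hyI 0 (mem_Ici.2 le_rfl)).continuousAt.mul continuousAt_const).continuousWithinAt)
  have hcons : ∀ t ∈ Ici (0:ℝ),
      ((∫ y in (0:ℝ)..xmax, S y t * p y) + ∫ y in (0:ℝ)..xmax, I y t * p y) = n₀ := by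
    intro t ht
    rw [← hsplit t ht]
    rcases eq_or_lt_of_le (show (0:ℝ) ≤ t from ht) with h | h
    · rw [← h]; exact hn0
    · have h1 : ∀ a ∈ Ioc (0:ℝ) t,
          (∫ y in (0:ℝ)..xmax, (S y t + I y t) * p y)
            = ∫ y in (0:ℝ)..xmax, (S y a + I y a) * p y := by
        intro a ha
        have hcont : ContinuousOn (fun τ => ∫ y in (0:ℝ)..xmax, (S y τ + I y τ) * p y)
            (Icc a t) := fun τ hτ =>
          ((hder τ (lt_of_lt_of_le ha.1 hτ.1)).continuousAt).continuousWithinAt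
        have hdrv : ∀ τ ∈ Ico a t, HasDerivWithinAt
            (fun τ => ∫ y in (0:ℝ)..xmax, (S y τ + I y τ) * p y) 0 (Ici τ) τ := fun τ hτ =>
          (hder τ (lt_of_lt_of_le ha.1 hτ.1)).hasDerivWithinAt
        exact constant_of_has_deriv_right_zero hcont hdrv t ⟨ha.2, le_rfl⟩
      have h2 : Filter.Tendsto (fun τ => ∫ y in (0:ℝ)..xmax, (S y τ + I y τ) * p y)
          (nhdsWithin 0 (Ioi 0)) (nhds (∫ y in (0:ℝ)..xmax, (S y 0 + I y 0) * p y)) := hcont0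
      have h3 : Filter.Tendsto (fun τ => ∫ y in (0:ℝ)..xmax, (S y τ + I y τ) * p y)
          (nhdsWithin 0 (Ioi 0)) (nhds (∫ y in (0:ℝ)..xmax, (S y t + I y t) * p y)) := by
        apply Filter.Tendsto.congr' _ tendsto_const_nhds
        filter_upwards [Ioc_mem_nhdsGT_of_mem (left_mem_Ico.2 h)] with a ha
        exact h1 a ha
      rw [tendsto_nhds_unique h3 h2, hn0]
  -- final fencing argument
  intro x hx t ht
  have ht0 : (0:ℝ) ≤ t := ht
  refine ⟨add_nonneg (hSnonneg x hx t ht) (hInonneg x hx t ht), ?_⟩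
  have hd : 0 < min DI DS := lt_min hDI hDS
  have hw : 0 ≤ x / m := div_nonneg hx.1 hm.le
  set Ct := max C (max DI DS / min DI DS) with hCt_def
  have hDle : max DI DS ≤ min DI DS * Ct := by
    have : max DI DS / min DI DS ≤ Ct := le_max_right _ _
    calc max DI DS = min DI DS * (max DI DS / min DI DS) := by field_simp
      _ ≤ min DI DS * Ct := by gcongr
  suffices hsuf : ∀ ε > (0:ℝ), S x t + I x t ≤ Ct * n₀ * (x / m) + ε * (1 + t) by
    by_contra hlt
    push_neg at hlt
    have h1t : (0:ℝ) < 1 + t := by linarith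
    have hgood := hsuf ((S x t + I x t - Ct * n₀ * (x / m)) / (2 * (1 + t)))
      (div_pos (by linarith) (by linarith))
    have heq : (S x t + I x t - Ct * n₀ * (x / m)) / (2 * (1 + t)) * (1 + t)
        = (S x t + I x t - Ct * n₀ * (x / m)) / 2 := by
      field_simp
    rw [heq] at hgood
    linarith
  intro ε hε
  have key := image_le_of_deriv_right_lt_deriv_boundary
    (f := fun τ => S x τ + I x τ)
    (f' := fun τ => -(DS * (S x τ - x / m * ∫ y in (0:ℝ)..xmax, S y τ * p y))
      - DI * (I x τ - x / m * ∫ y in (0:ℝ)..xmax, I y τ * p y))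
    (a := 0) (b := t)
    (B := fun τ => Ct * n₀ * (x / m) + ε * (1 + τ)) (B' := fun _ => ε)
    ?_ ?_ ?_ ?_ ?_
  · exact key (right_mem_Icc.2 ht0)
  · exact fun τ hτ => ((hND x hx τ hτ.1).continuousAt).continuousWithinAt
  · exact fun τ hτ => (hND x hx τ hτ.1).hasDerivWithinAt
  · -- initial comparison
    have h0 : S x 0 + I x 0 = S₀ x + I₀ x := by rw [hSinit x hx, hIinit x hx]
    have h1 : S₀ x + I₀ x ≤ C * n₀ * (x / m) := hN0 x hx
    have h2 : C * n₀ * (x / m) ≤ Ct * n₀ * (x / m) := by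
      have : C ≤ Ct := le_max_left _ _
      gcongr
    show S x 0 + I x 0 ≤ Ct * n₀ * (x / m) + ε * (1 + 0)
    rw [h0]
    nlinarith
  · intro τ
    have : HasDerivAt (fun τ : ℝ => Ct * n₀ * (x / m) + ε * (1 + τ)) (ε * 1) τ :=
      (((hasDerivAt_id τ).const_add (1:ℝ)).const_mul ε).const_add _
    simpa using this
  · -- derivative comparison at contact points
    intro τ hτ hfτ
    have hτ0 : (0:ℝ) ≤ τ := hτ.1
    have hs1 := hsnn τ hτ0
    have hs2 := hinn τ hτ0
    have hsum := hcons τ hτ0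
    have hSv := hSnonneg x hx τ hτ0
    have hIv := hInonneg x hx τ hτ0
    have h1τ : (0:ℝ) < 1 + τ := by linarith
    have hkey : (min DI DS) * (S x τ + I x τ)
        = (min DI DS) * (Ct * n₀ * (x / m)) + (min DI DS) * (ε * (1 + τ)) := by
      rw [hfτ]; ring
    have h5 : (max DI DS) * (x / m) * ((∫ y in (0:ℝ)..xmax, S y τ * p y)
        + ∫ y in (0:ℝ)..xmax, I y τ * p y) = (max DI DS) * (x / m) * n₀ := by
      rw [hsum]
    linarith [hkey, h5, mul_nonneg (sub_nonneg.2 (min_le_right DI DS)) hSv,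
      mul_nonneg (sub_nonneg.2 (min_le_left DI DS)) hIv,
      mul_nonneg (mul_nonneg hw (sub_nonneg.2 (le_max_right DI DS))) hs1,
      mul_nonneg (mul_nonneg hw (sub_nonneg.2 (le_max_left DI DS))) hs2,
      mul_nonneg (mul_nonneg hw hn₀pos.le) (sub_nonneg.2 hDle),
      mul_pos (mul_pos hd hε) h1τ]
end
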